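/- arXiv:2312.08893 — 7 statements merged into one kernel-verified Lean document; each statement's English description precedes it below -/
import Mathlib

section
/- Let λ = (λ₁, …, λ_n) ∈ ℝⁿ with λ₁ ≥ λ₂ ≥ … ≥ λ_n ≥ 0, and let τ, j be positive integers with τ ≥ j. Then (τ + 1 − j) · σ_{τ+1}(λ) ≤ σ_τ(λ) · Σ_{i=j+1}^{n} λ_i; equivalently, when σ_τ(λ) > 0, the ratio σ_{τ+1}(λ)/σ_τ(λ) is at most (1/(τ+1−j)) · Σ_{i=j+1}^{n} λ_i. -/
open Finset

/-- Lemma 3.1 of [GS12]: for a nonincreasing nonnegative vector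
`λ : Fin n → ℝ` and positive integers `τ ≥ j`, we have
`(τ + 1 − j) · σ_{τ+1}(λ) ≤ σ_τ(λ) · Σ_{i=j+1}^{n} λ_i`,
where `σ_ℓ(λ) = Σ_{S ⊆ [n], |S| = ℓ} Π_{i ∈ S} λ_i` is the elementary symmetric polynomial,
indices are 1-based (so `i : Fin n` has 1-based index `i+1`, and the sum
`Σ_{i=j+1}^n λ_i` runs over those `i : Fin n` with `j ≤ i.val`). -/
theorem stmt3 {n : ℕ} (lam : Fin n → ℝ)
    (hmono : ∀ i j : Fin n, i ≤ j → lam j ≤ lam i)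
    (hnonneg : ∀ i, 0 ≤ lam i)
    (τ j : ℕ) (hj : 1 ≤ j) (hτj : j ≤ τ) :
    ((τ : ℝ) + 1 - j) *
        (∑ S ∈ Finset.powersetCard (τ + 1) (Finset.univ : Finset (Fin n)), ∏ i ∈ S, lam i)
      ≤ (∑ S ∈ Finset.powersetCard τ (Finset.univ : Finset (Fin n)), ∏ i ∈ S, lam i) *
          ∑ i ∈ Finset.univ.filter (fun i : Fin n => j ≤ (i : ℕ)), lam i := by
  classical
  set A : Finset (Fin n) := univ.filter (fun i : Fin n => j ≤ (i : ℕ)) with hA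
  have hprodnn : ∀ S : Finset (Fin n), 0 ≤ ∏ i ∈ S, lam i := fun S =>
    Finset.prod_nonneg fun i _ => hnonneg i
  -- Step 1: pointwise bound for each (τ+1)-set S
  have key : ∀ S ∈ powersetCard (τ + 1) (univ : Finset (Fin n)),
      ((τ : ℝ) + 1 - j) * ∏ i ∈ S, lam i
        ≤ ∑ i ∈ S.filter (fun i : Fin n => j ≤ (i : ℕ)), ∏ k ∈ S, lam k := by
    intro S hS
    have hcard : S.card = τ + 1 := (Finset.mem_powersetCard.mp hS).2
    have hsmall : (S.filter (fun i : Fin n => ¬ j ≤ (i : ℕ))).card ≤ j := by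
      have hsub : S.filter (fun i : Fin n => ¬ j ≤ (i : ℕ))
          ⊆ univ.filter (fun i : Fin n => (i : ℕ) < j) := by
        intro x hx
        simp only [Finset.mem_filter, not_le] at hx ⊢
        exact ⟨Finset.mem_univ x, hx.2⟩
      refine le_trans (Finset.card_le_card hsub) ?_
      have : (univ.filter (fun i : Fin n => (i : ℕ) < j)).card ≤ (Finset.range j).card := by
        apply Finset.card_le_card_of_injOn (fun i : Fin n => (i : ℕ))
        · intro x hx
          simp only [Finset.mem_coe, Finset.mem_filter] at hx
          exact Finset.mem_range.mpr hx.2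
        · intro a _ b _ h
          exact Fin.ext h
      simpa using this
    have hbig : τ + 1 - j ≤ (S.filter (fun i : Fin n => j ≤ (i : ℕ))).card := by
      have := Finset.card_filter_add_card_filter_not
        (s := S) (p := fun i : Fin n => j ≤ (i : ℕ))
      omega
    rw [Finset.sum_const, nsmul_eq_mul]
    apply mul_le_mul_of_nonneg_right _ (hprodnn S)
    have : ((τ + 1 - j : ℕ) : ℝ) ≤ ((S.filter (fun i : Fin n => j ≤ (i : ℕ))).card : ℝ) := by
      exact_mod_cast hbig
    have hcast : ((τ : ℝ) + 1 - j) = ((τ + 1 - j : ℕ) : ℝ) := by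
      push_cast [Nat.cast_sub (by omega : j ≤ τ + 1)]
      ring
    linarith
  -- Step 2: reindex the double sum
  have reindex :
      ∑ S ∈ powersetCard (τ + 1) (univ : Finset (Fin n)),
        ∑ i ∈ S.filter (fun i : Fin n => j ≤ (i : ℕ)), ∏ k ∈ S, lam k
      = ∑ T ∈ powersetCard τ (univ : Finset (Fin n)),
          ∑ i ∈ A \ T, (∏ k ∈ T, lam k) * lam i := by
    rw [Finset.sum_sigma', Finset.sum_sigma']
    refine Finset.sum_nbij' (fun x => ⟨x.1.erase x.2, x.2⟩) (fun x => ⟨insert x.2 x.1, x.2⟩)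
      ?_ ?_ ?_ ?_ ?_
    · rintro ⟨S, i⟩ hx
      simp only [Finset.mem_sigma, Finset.mem_powersetCard, Finset.mem_filter] at hx ⊢
      obtain ⟨⟨_, hScard⟩, hiS, hij⟩ := hx
      refine ⟨⟨Finset.subset_univ _, ?_⟩, ?_⟩
      · rw [Finset.card_erase_of_mem hiS, hScard]; omega
      · rw [Finset.mem_sdiff, hA]
        exact ⟨Finset.mem_filter.mpr ⟨Finset.mem_univ _, hij⟩, Finset.notMem_erase _ _⟩
    · rintro ⟨T, i⟩ hx
      simp only [Finset.mem_sigma, Finset.mem_powersetCard, Finset.mem_sdiff, hA,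
        Finset.mem_filter] at hx ⊢
      obtain ⟨⟨_, hTcard⟩, ⟨_, hij⟩, hiT⟩ := hx
      refine ⟨⟨Finset.subset_univ _, ?_⟩, Finset.mem_insert_self _ _, hij⟩
      rw [Finset.card_insert_of_notMem hiT, hTcard]
    · rintro ⟨S, i⟩ hx
      simp only [Finset.mem_sigma, Finset.mem_filter] at hx
      simp [Finset.insert_erase hx.2.1]
    · rintro ⟨T, i⟩ hx
      simp only [Finset.mem_sigma, Finset.mem_sdiff] at hx
      simp [Finset.erase_insert hx.2.2]
    · rintro ⟨S, i⟩ hx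
      simp only [Finset.mem_sigma, Finset.mem_filter] at hx
      exact (Finset.prod_erase_mul _ _ hx.2.1).symm
  -- Step 3: enlarge A \ T to A and conclude
  calc ((τ : ℝ) + 1 - j) *
        ∑ S ∈ powersetCard (τ + 1) (univ : Finset (Fin n)), ∏ i ∈ S, lam i
      = ∑ S ∈ powersetCard (τ + 1) (univ : Finset (Fin n)),
          ((τ : ℝ) + 1 - j) * ∏ i ∈ S, lam i := Finset.mul_sum _ _ _
    _ ≤ ∑ S ∈ powersetCard (τ + 1) (univ : Finset (Fin n)),
          ∑ i ∈ S.filter (fun i : Fin n => j ≤ (i : ℕ)), ∏ k ∈ S, lam k :=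
        Finset.sum_le_sum key
    _ = ∑ T ∈ powersetCard τ (univ : Finset (Fin n)),
          ∑ i ∈ A \ T, (∏ k ∈ T, lam k) * lam i := reindex
    _ ≤ ∑ T ∈ powersetCard τ (univ : Finset (Fin n)),
          ∑ i ∈ A, (∏ k ∈ T, lam k) * lam i := by
        refine Finset.sum_le_sum fun T _ => ?_
        refine Finset.sum_le_sum_of_subset_of_nonneg (Finset.sdiff_subset) ?_
        intro i _ _
        exact mul_nonneg (hprodnn T) (hnonneg i)
    _ = (∑ S ∈ powersetCard τ (univ : Finset (Fin n)), ∏ i ∈ S, lam i) *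
          ∑ i ∈ Finset.univ.filter (fun i : Fin n => j ≤ (i : ℕ)), lam i := by
        rw [Finset.sum_mul]
        exact Finset.sum_congr rfl fun T _ => (Finset.mul_sum _ _ _).symm
end

section
/- Let λ = (λ₁, …, λ_m) ∈ ℝ^m with λ₁ ≥ λ₂ ≥ … ≥ λ_m ≥ 0, and let k, k' be integers with 1 ≤ k < k' ≤ m. Then for every index i ∈ {1,…,m}: (k' − k) · σ_{k'}(λ) ≤ σ_{k'−1}(λ_{−i}) · ((k'−k)·λ_i + Σ_{j>k, j≠i} λ_j); equivalently, when σ_{k'}(λ) > 0, σ_{k'−1}(λ_{−i}) / σ_{k'}(λ) ≥ 1 / (λ_i + (1/(k'−k)) · Σ_{j>k, j≠i} λ_j). -/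
/-- for a nonincreasing nonnegative vector `λ : Fin m → ℝ` (1-based
indices: `i : Fin m` has 1-based index `i+1`), integers `1 ≤ k < k' ≤ m` and any index
`i`, we have
`(k'−k) · σ_{k'}(λ) ≤ σ_{k'−1}(λ_{−i}) · ((k'−k)·λ_i + Σ_{j>k, j≠i} λ_j)`.
Here `σ_ℓ(λ) = Σ_{S, |S| = ℓ} Π_{j ∈ S} λ_j`, `λ_{−i}` is `λ` with the `i`-th entry
removed (modeled by summing over subsets of `univ.erase i`), and the last sum runs over
the 1-based indices `j ∈ {k+1,…,m}` with `j ≠ i` (i.e. `j : Fin m` with `k ≤ j.val`). -/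
theorem stmt4 {m : ℕ} (lam : Fin m → ℝ)
    (hmono : ∀ i j : Fin m, i ≤ j → lam j ≤ lam i)
    (hnonneg : ∀ i, 0 ≤ lam i)
    (k k' : ℕ) (hk : 1 ≤ k) (hkk' : k < k') (hk'm : k' ≤ m)
    (i : Fin m) :
    ((k' : ℝ) - k) *
        (∑ S ∈ Finset.powersetCard k' (Finset.univ : Finset (Fin m)), ∏ j ∈ S, lam j)
      ≤ (∑ S ∈ Finset.powersetCard (k' - 1) (Finset.univ.erase i), ∏ j ∈ S, lam j) *
          (((k' : ℝ) - k) * lam i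
            + ∑ j ∈ Finset.univ.filter (fun j : Fin m => k ≤ (j : ℕ) ∧ j ≠ i), lam j) := by
  have hprodnn : ∀ S : Finset (Fin m), 0 ≤ ∏ j ∈ S, lam j := fun S =>
    Finset.prod_nonneg fun j _ => hnonneg j
  set l := k' - 1 with hl
  have hk'l : k' = l + 1 := by omega
  set T : Finset (Fin m) := Finset.univ.erase i with hT
  have hiT : i ∉ T := Finset.notMem_erase i _
  have hmemT : ∀ {S : Finset (Fin m)} {n : ℕ}, S ∈ Finset.powersetCard n T → i ∉ S :=
    fun {S n} hS hc => hiT ((Finset.mem_powersetCard.mp hS).1 hc)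
  -- Step A
  have stepA : (∑ S ∈ Finset.powersetCard k' (Finset.univ : Finset (Fin m)), ∏ j ∈ S, lam j)
      = lam i * (∑ S ∈ Finset.powersetCard l T, ∏ j ∈ S, lam j)
        + ∑ S ∈ Finset.powersetCard k' T, ∏ j ∈ S, lam j := by
    have hins : (Finset.univ : Finset (Fin m)) = insert i T :=
      (Finset.insert_erase (Finset.mem_univ i)).symm
    rw [hk'l]
    conv_lhs => rw [hins]
    rw [Finset.powersetCard_succ_insert hiT]
    rw [Finset.sum_union ?hdisj]
    case hdisj =>
      rw [Finset.disjoint_right]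
      rintro S hS hS'
      obtain ⟨S', hS', rfl⟩ := Finset.mem_image.mp hS
      exact hmemT hS' (Finset.mem_insert_self i S')
    rw [Finset.sum_image ?hinj]
    case hinj =>
      intro S hS S' hS' h
      have h1 := hmemT hS
      have h2 := hmemT hS'
      have := congrArg (Finset.erase · i) h
      simpa [Finset.erase_insert h1, Finset.erase_insert h2] using this
    rw [Finset.sum_congr rfl (fun S hS => Finset.prod_insert (hmemT hS)), ← Finset.mul_sum]
    ring
  -- the sum over j rewritten as over T
  have hCform : (Finset.univ.filter (fun j : Fin m => k ≤ (j : ℕ) ∧ j ≠ i))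
      = T.filter (fun j : Fin m => k ≤ (j : ℕ)) := by
    ext j
    simp [hT, Finset.mem_erase, and_comm]
  -- Step B
  have stepB : ((k' : ℝ) - k) * (∑ S ∈ Finset.powersetCard k' T, ∏ j ∈ S, lam j)
      ≤ (∑ j ∈ T.filter (fun j : Fin m => k ≤ (j : ℕ)), lam j)
        * (∑ S ∈ Finset.powersetCard l T, ∏ j ∈ S, lam j) := by
    -- pointwise bound
    have pointwise : ∀ S ∈ Finset.powersetCard k' T,
        ((k' : ℝ) - k) * ∏ j ∈ S, lam j
          ≤ ∑ j ∈ S.filter (fun j : Fin m => k ≤ (j : ℕ)), lam j * ∏ x ∈ S.erase j, lam x := by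
      intro S hS
      obtain ⟨hsub, hcard⟩ := Finset.mem_powersetCard.mp hS
      have heq : ∀ j ∈ S.filter (fun j : Fin m => k ≤ (j : ℕ)),
          lam j * ∏ x ∈ S.erase j, lam x = ∏ x ∈ S, lam x := fun j hj =>
        Finset.mul_prod_erase S lam (Finset.mem_filter.mp hj).1
      rw [Finset.sum_congr rfl heq, Finset.sum_const, nsmul_eq_mul]
      have hcard2 : k' - k ≤ (S.filter (fun j : Fin m => k ≤ (j : ℕ))).card := by
        have hsplit := Finset.card_filter_add_card_filter_not
          (s := S) (p := fun j : Fin m => k ≤ (j : ℕ))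
        have hsmall : (S.filter (fun j : Fin m => ¬ k ≤ (j : ℕ))).card ≤ k := by
          have : (S.filter (fun j : Fin m => ¬ k ≤ (j : ℕ))).card
              ≤ (Finset.range k).card := by
            apply Finset.card_le_card_of_injOn (fun j : Fin m => (j : ℕ))
            · intro j hj
              have := (Finset.mem_filter.mp hj).2
              simp only [Finset.mem_coe, Finset.mem_range]
              omega
            · intro a _ b _ hab
              exact Fin.ext hab
          simpa using this
        omega
      have : ((k' : ℝ) - k) ≤ ((S.filter (fun j : Fin m => k ≤ (j : ℕ))).card : ℝ) := by
        have := (Nat.cast_le (α := ℝ)).mpr hcard2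
        push_cast [Nat.cast_sub hkk'.le] at this
        linarith
      exact mul_le_mul_of_nonneg_right this (hprodnn S)
    calc ((k' : ℝ) - k) * (∑ S ∈ Finset.powersetCard k' T, ∏ j ∈ S, lam j)
        = ∑ S ∈ Finset.powersetCard k' T, ((k' : ℝ) - k) * ∏ j ∈ S, lam j := by
          rw [Finset.mul_sum]
      _ ≤ ∑ S ∈ Finset.powersetCard k' T,
            ∑ j ∈ S.filter (fun j : Fin m => k ≤ (j : ℕ)), lam j * ∏ x ∈ S.erase j, lam x :=
          Finset.sum_le_sum pointwise
      _ = ∑ S ∈ Finset.powersetCard k' T, ∑ j ∈ T.filter (fun j : Fin m => k ≤ (j : ℕ)),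
            (if j ∈ S then lam j * ∏ x ∈ S.erase j, lam x else 0) := by
          apply Finset.sum_congr rfl
          intro S hS
          have hsub := (Finset.mem_powersetCard.mp hS).1
          have : S.filter (fun j : Fin m => k ≤ (j : ℕ))
              = (T.filter (fun j : Fin m => k ≤ (j : ℕ))).filter (· ∈ S) := by
            ext j
            simp only [Finset.mem_filter]
            constructor
            · rintro ⟨hjS, hjk⟩; exact ⟨⟨hsub hjS, hjk⟩, hjS⟩
            · rintro ⟨⟨_, hjk⟩, hjS⟩; exact ⟨hjS, hjk⟩
          rw [this, Finset.sum_filter]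
      _ = ∑ j ∈ T.filter (fun j : Fin m => k ≤ (j : ℕ)), ∑ S ∈ Finset.powersetCard k' T,
            (if j ∈ S then lam j * ∏ x ∈ S.erase j, lam x else 0) := Finset.sum_comm
      _ ≤ ∑ j ∈ T.filter (fun j : Fin m => k ≤ (j : ℕ)),
            lam j * ∑ S ∈ Finset.powersetCard l T, ∏ x ∈ S, lam x := by
          apply Finset.sum_le_sum
          intro j hj
          rw [← Finset.sum_filter, ← Finset.mul_sum]
          apply mul_le_mul_of_nonneg_left _ (hnonneg j)
          -- ∑ over S containing j of ∏ erase ≤ ∑ over powersetCard l T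
          have himg : (∑ S ∈ (Finset.powersetCard k' T).filter (j ∈ ·), ∏ x ∈ S.erase j, lam x)
              = ∑ S' ∈ ((Finset.powersetCard k' T).filter (j ∈ ·)).image (fun S => S.erase j),
                  ∏ x ∈ S', lam x := by
            rw [Finset.sum_image]
            intro S hS S' hS' h
            have hjS := (Finset.mem_filter.mp hS).2
            have hjS' := (Finset.mem_filter.mp hS').2
            rw [← Finset.insert_erase hjS, ← Finset.insert_erase hjS', show S.erase j = S'.erase j from h]
          rw [himg]
          apply Finset.sum_le_sum_of_subset_of_nonneg
          · intro S' hS'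
            obtain ⟨S, hS, rfl⟩ := Finset.mem_image.mp hS'
            obtain ⟨hS, hjS⟩ := Finset.mem_filter.mp hS
            obtain ⟨hsub, hcard⟩ := Finset.mem_powersetCard.mp hS
            refine Finset.mem_powersetCard.mpr ⟨(Finset.erase_subset _ _).trans hsub, ?_⟩
            rw [Finset.card_erase_of_mem hjS, hcard]
          · intro S _ _; exact hprodnn S
      _ = (∑ j ∈ T.filter (fun j : Fin m => k ≤ (j : ℕ)), lam j)
            * (∑ S ∈ Finset.powersetCard l T, ∏ j ∈ S, lam j) := by
          rw [Finset.sum_mul]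
  rw [stepA, hCform]
  have hAnn : 0 ≤ ∑ S ∈ Finset.powersetCard l T, ∏ j ∈ S, lam j :=
    Finset.sum_nonneg fun S _ => hprodnn S
  nlinarith [stepB]
end

section
/- Let H and H̃ be real symmetric positive definite n×n matrices, and let 0 < ε < 1 be such that for all x ∈ ℝⁿ: (1/(1+ε)) · xᵀHx ≤ xᵀH̃x ≤ (1+ε) · xᵀHx. Then for every v ∈ ℝⁿ, the preconditioned gradient step satisfies ‖v − H̃⁻¹ H v‖_H² ≤ 2ε · ‖v‖_H², i.e., (v − H̃⁻¹Hv)ᵀ · H · (v − H̃⁻¹Hv) ≤ 2ε · vᵀHv. -/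
open Matrix

/-- preconditioned gradient step: let `H` and `H̃` be real symmetric
positive definite `n × n` matrices and `0 < ε < 1` be such that
`(1/(1+ε))·xᵀHx ≤ xᵀH̃x ≤ (1+ε)·xᵀHx` for all `x`. Then for every `v`, the
preconditioned gradient step satisfies
`(v − H̃⁻¹Hv)ᵀ · H · (v − H̃⁻¹Hv) ≤ 2ε · vᵀHv`, i.e. `‖v − H̃⁻¹Hv‖_H² ≤ 2ε‖v‖_H²`. -/
theorem stmt7 {n : ℕ} (H Ht : Matrix (Fin n) (Fin n) ℝ)
    (hH : H.PosDef) (hHt : Ht.PosDef)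
    (ε : ℝ) (hε0 : 0 < ε) (hε1 : ε < 1)
    (happrox : ∀ x : Fin n → ℝ,
      (1 / (1 + ε)) * (x ⬝ᵥ (H *ᵥ x)) ≤ x ⬝ᵥ (Ht *ᵥ x) ∧
        x ⬝ᵥ (Ht *ᵥ x) ≤ (1 + ε) * (x ⬝ᵥ (H *ᵥ x)))
    (v : Fin n → ℝ) :
    (v - Ht⁻¹ *ᵥ (H *ᵥ v)) ⬝ᵥ (H *ᵥ (v - Ht⁻¹ *ᵥ (H *ᵥ v)))
      ≤ 2 * ε * (v ⬝ᵥ (H *ᵥ v)) := by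
  have hHs : Hᵀ = H := by simpa [Matrix.IsHermitian] using hH.1
  have hHts : Htᵀ = Ht := by simpa [Matrix.IsHermitian] using hHt.1
  set w := Ht⁻¹ *ᵥ (H *ᵥ v) with hw
  -- Ht w = H v
  have hkey : Ht *ᵥ w = H *ᵥ v := by
    rw [hw, mulVec_mulVec, Matrix.mul_nonsing_inv Ht hHt.det_pos.ne'.isUnit, one_mulVec]
  -- symmetry
  have hsym : ∀ (M : Matrix (Fin n) (Fin n) ℝ), Mᵀ = M → ∀ x y : Fin n → ℝ,
      x ⬝ᵥ (M *ᵥ y) = y ⬝ᵥ (M *ᵥ x) := by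
    intro M hM x y
    rw [dotProduct_mulVec, ← mulVec_transpose, hM, dotProduct_comm]
  -- nonnegativity of quadratic forms
  have hHnn : ∀ x : Fin n → ℝ, 0 ≤ x ⬝ᵥ (H *ᵥ x) := fun x => by simpa using hH.posSemidef.dotProduct_mulVec_nonneg x
  have hHtnn : ∀ x : Fin n → ℝ, 0 ≤ x ⬝ᵥ (Ht *ᵥ x) := fun x => by simpa using hHt.posSemidef.dotProduct_mulVec_nonneg x
  set q := v ⬝ᵥ (H *ᵥ v) with hq
  set s := w ⬝ᵥ (Ht *ᵥ w) with hs
  set t := w ⬝ᵥ (H *ᵥ w) with ht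
  -- cross terms
  have hcross : v ⬝ᵥ (H *ᵥ w) = s := by
    rw [hsym H hHs v w, ← hkey, hsym Ht hHts w w]
  have hcross2 : w ⬝ᵥ (H *ᵥ v) = s := by rw [hsym H hHs w v, hcross]
  -- expand the quadratic
  have hexp : (v - w) ⬝ᵥ (H *ᵥ (v - w)) = q - 2 * s + t := by
    rw [mulVec_sub, dotProduct_sub, sub_dotProduct, sub_dotProduct,
      hcross, hcross2]
    ring
  rw [hexp]
  -- bound t ≤ (1+ε) s
  have hts : t ≤ (1 + ε) * s := by
    have := (happrox w).1
    have h1ε : (0:ℝ) < 1 + ε := by linarith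
    rw [div_mul_eq_mul_div, one_mul, div_le_iff₀ h1ε] at this
    linarith [this]
  -- Cauchy–Schwarz for Ht: q^2 ≤ (v ⬝ᵥ Ht v) * s
  have hCS : q ^ 2 ≤ (v ⬝ᵥ (Ht *ᵥ v)) * s := by
    have hpoly : ∀ x : ℝ, 0 ≤ s * (x * x) + (2 * q) * x + v ⬝ᵥ (Ht *ᵥ v) := by
      intro x
      have h0 := hHtnn (x • w + v)
      have hvq : v ⬝ᵥ (Ht *ᵥ w) = q := by rw [hkey]
      have hwq : w ⬝ᵥ (Ht *ᵥ v) = q := by rw [hsym Ht hHts w v, hvq]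
      calc (0:ℝ) ≤ (x • w + v) ⬝ᵥ (Ht *ᵥ (x • w + v)) := h0
        _ = s * (x * x) + (2 * q) * x + v ⬝ᵥ (Ht *ᵥ v) := by
            rw [mulVec_add, dotProduct_add, add_dotProduct, add_dotProduct,
              mulVec_smul, smul_dotProduct, smul_dotProduct, dotProduct_smul,
              dotProduct_smul, hvq, hwq]
            simp [smul_eq_mul]
            ring
    have := discrim_le_zero hpoly
    rw [discrim] at this
    nlinarith [this]
  -- bound v Ht v ≤ (1+ε) q
  have hvtv : v ⬝ᵥ (Ht *ᵥ v) ≤ (1 + ε) * q := (happrox v).2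
  have hq0 : 0 ≤ q := hHnn v
  have hs0 : 0 ≤ s := hHtnn w
  have hCS2 : q ^ 2 ≤ (1 + ε) * q * s := by
    calc q ^ 2 ≤ (v ⬝ᵥ (Ht *ᵥ v)) * s := hCS
      _ ≤ (1 + ε) * q * s := by nlinarith
  have hqs : q ≤ (1 + ε) * s := by
    rcases eq_or_lt_of_le hq0 with h | h
    · nlinarith [hs0]
    · nlinarith [hCS2, h]
  rcases le_or_gt ε (1/2) with hhalf | hhalf
  · nlinarith [hqs, hts, mul_nonneg (mul_nonneg hε0.le hε0.le) hs0, hs0, hq0]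
  · nlinarith [hts, hs0, hq0, hqs]
end

section
/- Let B be a real m×m symmetric positive semidefinite matrix with operator norm ‖B‖₂ ≤ 1, and let d be a Rademacher vector uniform on {−1,1}^m. Then for every t ≥ 0: Pr{ dᵀBd ≥ (√(tr(B)) + t)² } ≤ e^{−t²/8}. (This follows because x ↦ √(xᵀBx) is convex and 1-Lipschitz with E[√(dᵀBd)] ≤ √(tr B).) -/
open Matrix

/-- The Rademacher (`±1`) vector in `ℝ^m` determined by a sign pattern
`s : Fin m → Bool`. -/
def radVec {m : ℕ} (s : Fin m → Bool) : Fin m → ℝ :=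
  fun i => if s i then 1 else -1

namespace Stmt10Aux
open Real Filter Topology


noncomputable def Phi (b a : ℝ) : ℝ :=
  (a - b)^2 + (a^2 + b^2) * (Real.log (a^2 + b^2) - Real.log 2 - 2 * Real.log b)
    - 2 * a^2 * (Real.log a - Real.log b)

noncomputable def Phi' (b a : ℝ) : ℝ :=
  2*(a - b) + 2*a*(Real.log (a^2 + b^2) - Real.log 2 - 2 * Real.log a)

noncomputable def Phi'' (b a : ℝ) : ℝ :=
  2*(Real.log (a^2 + b^2) - Real.log 2 - 2 * Real.log a) + 4*a^2/(a^2+b^2) - 2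

lemma hasDerivAt_Phi {b a : ℝ} (ha : 0 < a) : HasDerivAt (Phi b) (Phi' b a) a := by
  have hab : a^2 + b^2 ≠ 0 := by positivity
  have h1 : HasDerivAt (fun a : ℝ => a^2 + b^2) (2*a) a := by
    simpa using ((hasDerivAt_pow 2 a).add_const (b^2))
  have hlog : HasDerivAt (fun a : ℝ => Real.log (a^2 + b^2)) (2*a/(a^2+b^2)) a :=
    h1.log hab
  have h2 : HasDerivAt (fun a : ℝ => (a^2 + b^2) *
      (Real.log (a^2 + b^2) - Real.log 2 - 2 * Real.log b))
      (2*a * (Real.log (a^2 + b^2) - Real.log 2 - 2 * Real.log b)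
        + (a^2+b^2) * (2*a/(a^2+b^2))) a :=
    h1.mul ((hlog.sub_const _).sub_const _)
  have h3 : HasDerivAt (fun a : ℝ => 2 * a^2 * (Real.log a - Real.log b))
      (4*a*(Real.log a - Real.log b) + 2*a) a := by
    have h := (((hasDerivAt_pow 2 a).const_mul 2).mul
      ((Real.hasDerivAt_log ha.ne').sub_const (Real.log b)))
    refine h.congr_deriv ?_
    have h1' : a ^ 2 * a⁻¹ = a := by
      rw [sq, mul_assoc, mul_inv_cancel₀ ha.ne', mul_one]
    push_cast
    ring_nf
    rw [h1']
    ring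
  have h0 : HasDerivAt (fun a : ℝ => (a - b)^2) (2*(a-b)) a := by
    simpa using ((hasDerivAt_id a).sub_const b).fun_pow 2
  have h := (h0.add h2).sub h3
  refine h.congr_deriv ?_
  have hc : (a^2+b^2) * (2*a/(a^2+b^2)) = 2*a := by field_simp
  rw [hc]
  unfold Phi'
  ring

lemma hasDerivAt_Phi' {b a : ℝ} (ha : 0 < a) : HasDerivAt (Phi' b) (Phi'' b a) a := by
  have hab : a^2 + b^2 ≠ 0 := by positivity
  have h1 : HasDerivAt (fun a : ℝ => a^2 + b^2) (2*a) a := by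
    simpa using ((hasDerivAt_pow 2 a).add_const (b^2))
  have hlog : HasDerivAt (fun a : ℝ => Real.log (a^2 + b^2)) (2*a/(a^2+b^2)) a :=
    h1.log hab
  have hL : HasDerivAt (fun a : ℝ => Real.log (a^2 + b^2) - Real.log 2 - 2 * Real.log a)
      (2*a/(a^2+b^2) - 2*a⁻¹) a := by
    have h := (hlog.sub_const (Real.log 2)).sub ((Real.hasDerivAt_log ha.ne').const_mul 2)
    exact h
  have h2 : HasDerivAt (fun a : ℝ => 2*a*(Real.log (a^2 + b^2) - Real.log 2 - 2 * Real.log a))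
      (2*1*(Real.log (a^2 + b^2) - Real.log 2 - 2 * Real.log a)
        + 2*a*(2*a/(a^2+b^2) - 2*a⁻¹)) a := by
    have h := ((hasDerivAt_id a).const_mul 2).mul hL
    exact h
  have h0 : HasDerivAt (fun a : ℝ => 2*(a - b)) 2 a := by
    simpa using ((hasDerivAt_id a).sub_const b).const_mul 2
  have h := h0.add h2
  refine h.congr_deriv ?_
  have h4 : 2*a*(2*a/(a^2+b^2) - 2*a⁻¹) = 4*a^2/(a^2+b^2) - 4 := by
    field_simp
    ring
  rw [h4]
  unfold Phi''
  ring

lemma Phi''_nonneg {b a : ℝ} (hb : 0 < b) (ha : 0 < a) : 0 ≤ Phi'' b a := by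
  have h2a : (0:ℝ) < 2*a^2 := by positivity
  have hab : (0:ℝ) < a^2 + b^2 := by positivity
  set v : ℝ := (a^2 + b^2) / (2*a^2) with hv
  have hvpos : 0 < v := by positivity
  have hlogv : Real.log v = Real.log (a^2 + b^2) - Real.log 2 - 2 * Real.log a := by
    rw [hv, Real.log_div hab.ne' h2a.ne', Real.log_mul two_ne_zero (by positivity),
      Real.log_pow]
    push_cast; ring
  have hinv : 1/v = 2*a^2/(a^2+b^2) := by
    rw [hv]; field_simp
  have hkey : 1 - 1/v ≤ Real.log v := by
    have h := Real.log_le_sub_one_of_pos (show (0:ℝ) < 1/v by positivity)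
    rw [Real.log_div one_ne_zero hvpos.ne', Real.log_one] at h
    linarith
  have h5 : 4*a^2/(a^2+b^2) = 2*(1/v) := by rw [hinv]; ring
  unfold Phi''
  rw [← hlogv, h5]
  linarith

lemma Phi_self {b : ℝ} (hb : 0 < b) : Phi b b = 0 := by
  unfold Phi
  have h : b^2 + b^2 = 2*b^2 := by ring
  rw [h, Real.log_mul two_ne_zero (by positivity), Real.log_pow]
  push_cast; ring

lemma Phi'_self {b : ℝ} (hb : 0 < b) : Phi' b b = 0 := by
  unfold Phi'
  have h : b^2 + b^2 = 2*b^2 := by ring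
  rw [h, Real.log_mul two_ne_zero (by positivity), Real.log_pow]
  push_cast; ring

lemma Phi_nonneg {b a : ℝ} (hb : 0 < b) (ha : 0 < a) : 0 ≤ Phi b a := by
  have hmono : MonotoneOn (Phi' b) (Set.Ioi (0:ℝ)) := by
    apply monotoneOn_of_deriv_nonneg (convex_Ioi 0)
    · intro x hx
      exact (hasDerivAt_Phi' hx).continuousAt.continuousWithinAt
    · intro x hx
      rw [interior_Ioi] at hx
      exact (hasDerivAt_Phi' hx).differentiableAt.differentiableWithinAt
    · intro x hx
      rw [interior_Ioi] at hx
      rw [(hasDerivAt_Phi' hx).deriv]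
      exact Phi''_nonneg hb hx
  rcases le_total b a with hba | hba
  · have hm : MonotoneOn (Phi b) (Set.Ici b) := by
      apply monotoneOn_of_deriv_nonneg (convex_Ici b)
      · intro x hx
        exact (hasDerivAt_Phi (hb.trans_le hx)).continuousAt.continuousWithinAt
      · intro x hx
        rw [interior_Ici] at hx
        exact (hasDerivAt_Phi (hb.trans hx)).differentiableAt.differentiableWithinAt
      · intro x hx
        rw [interior_Ici] at hx
        rw [(hasDerivAt_Phi (hb.trans hx)).deriv]
        have h := hmono (Set.mem_Ioi.2 hb) (Set.mem_Ioi.2 (hb.trans hx)) (le_of_lt hx)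
        rwa [Phi'_self hb] at h
    have h := hm Set.self_mem_Ici (Set.mem_Ici.2 hba) hba
    rwa [Phi_self hb] at h
  · have hm : AntitoneOn (Phi b) (Set.Ioc 0 b) := by
      apply antitoneOn_of_deriv_nonpos (convex_Ioc 0 b)
      · intro x hx
        exact (hasDerivAt_Phi hx.1).continuousAt.continuousWithinAt
      · intro x hx
        rw [interior_Ioc] at hx
        exact (hasDerivAt_Phi hx.1).differentiableAt.differentiableWithinAt
      · intro x hx
        rw [interior_Ioc] at hx
        rw [(hasDerivAt_Phi hx.1).deriv]
        have h := hmono (Set.mem_Ioi.2 hx.1) (Set.mem_Ioi.2 hb) (le_of_lt hx.2)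
        rwa [Phi'_self hb] at h
    have h := hm (Set.mem_Ioc.2 ⟨ha, hba⟩) (Set.mem_Ioc.2 ⟨hb, le_refl b⟩) hba
    rwa [Phi_self hb] at h

lemma two_point_sq {a b : ℝ} (ha : 0 < a) (hb : 0 < b) :
    a^2 * Real.log (a^2) + b^2 * Real.log (b^2)
      - (a^2 + b^2) * Real.log ((a^2 + b^2)/2) ≤ (a - b)^2 := by
  have h := Phi_nonneg hb ha
  unfold Phi at h
  have hab : (0:ℝ) < a^2 + b^2 := by positivity
  rw [Real.log_div hab.ne' two_ne_zero]
  have hla : Real.log (a^2) = 2 * Real.log a := by rw [Real.log_pow]; push_cast; ring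
  have hlb : Real.log (b^2) = 2 * Real.log b := by rw [Real.log_pow]; push_cast; ring
  rw [hla, hlb]
  nlinarith [h]

lemma two_point {p q : ℝ} (hp : 0 < p) (hq : 0 < q) :
    p * Real.log p + q * Real.log q - (p + q) * Real.log ((p + q)/2)
      ≤ (Real.sqrt p - Real.sqrt q)^2 := by
  have h := two_point_sq (Real.sqrt_pos.2 hp) (Real.sqrt_pos.2 hq)
  rwa [Real.sq_sqrt hp.le, Real.sq_sqrt hq.le] at h

lemma two_point_c {p q c : ℝ} (hp : 0 < p) (hq : 0 < q) (hc : 0 < c) :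
    p * Real.log (p/c) + q * Real.log (q/c) - (p + q) * Real.log ((p + q)/(2*c))
      ≤ (Real.sqrt p - Real.sqrt q)^2 := by
  have h := two_point hp hq
  have hpq : (0:ℝ) < p + q := by linarith
  rw [Real.log_div hp.ne' hc.ne', Real.log_div hq.ne' hc.ne',
    show (p+q)/(2*c) = ((p+q)/2)/c by ring,
    Real.log_div (by positivity) hc.ne']
  nlinarith [h]



/-- flip the `i`-th sign -/
def flp {m : ℕ} (i : Fin m) (s : Fin m → Bool) : Fin m → Bool :=
  Function.update s i (!(s i))

lemma flp_flp {m : ℕ} (i : Fin m) (s : Fin m → Bool) : flp i (flp i s) = s := by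
  unfold flp
  rw [Function.update_idem, Function.update_self, Bool.not_not, Function.update_eq_self]

lemma flp_apply_self {m : ℕ} (i : Fin m) (s : Fin m → Bool) : flp i s i = !(s i) := by
  simp [flp]

lemma flp_apply_ne {m : ℕ} (i j : Fin m) (s : Fin m → Bool) (h : j ≠ i) :
    flp i s j = s j := by
  simp [flp, Function.update_of_ne h]

lemma sum_cons {m : ℕ} (h : (Fin (m+1) → Bool) → ℝ) :
    ∑ x, h x = ∑ y : Fin m → Bool, (h (Fin.cons false y) + h (Fin.cons true y)) := by
  rw [← (Fin.consEquiv (fun _ => Bool)).sum_comp h, Fintype.sum_prod_type, Fintype.sum_bool,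
    ← Finset.sum_add_distrib]
  exact Finset.sum_congr rfl (fun y _ => add_comm _ _)

lemma flp_cons_zero {m : ℕ} (b : Bool) (y : Fin m → Bool) :
    flp 0 (Fin.cons b y) = Fin.cons (!b) y := by
  unfold flp
  rw [Fin.cons_zero, Fin.update_cons_zero]

lemma flp_cons_succ {m : ℕ} (i : Fin m) (b : Bool) (y : Fin m → Bool) :
    flp i.succ (Fin.cons b y) = Fin.cons b (flp i y) := by
  unfold flp
  rw [Fin.cons_succ, ← Fin.cons_update]

lemma sqrt_diff_sq_sum {ι : Type*} [Fintype ι] (u v : ι → ℝ)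
    (hu : ∀ x, 0 ≤ u x) (hv : ∀ x, 0 ≤ v x) :
    (Real.sqrt (∑ x, u x) - Real.sqrt (∑ x, v x))^2
      ≤ ∑ x, (Real.sqrt (u x) - Real.sqrt (v x))^2 := by
  have hcs := Real.sum_sqrt_mul_sqrt_le Finset.univ hu hv
  have expand : ∑ x, (Real.sqrt (u x) - Real.sqrt (v x))^2
      = (∑ x, u x) + (∑ x, v x) - 2 * ∑ x, Real.sqrt (u x) * Real.sqrt (v x) := by
    rw [Finset.mul_sum, ← Finset.sum_add_distrib, ← Finset.sum_sub_distrib]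
    refine Finset.sum_congr rfl fun x _ => ?_
    rw [sub_sq, Real.sq_sqrt (hu x), Real.sq_sqrt (hv x)]
    ring
  rw [expand, sub_sq, Real.sq_sqrt (Finset.sum_nonneg fun x _ => hu x),
    Real.sq_sqrt (Finset.sum_nonneg fun x _ => hv x)]
  nlinarith [hcs]


/-- log-Sobolev inequality on the discrete cube (unnormalized form) -/
lemma cube_lsi (m : ℕ) (g : (Fin m → Bool) → ℝ) (hg : ∀ x, 0 < g x) :
    (∑ x, g x * Real.log (g x)) - (∑ x, g x) * Real.log ((∑ x, g x) / 2^m)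
      ≤ (1/2) * ∑ x, ∑ i, (Real.sqrt (g x) - Real.sqrt (g (flp i x)))^2 := by
  induction m with
  | zero =>
    simp [Fintype.sum_unique]
  | succ m ih =>
    set gf : (Fin m → Bool) → ℝ := fun y => g (Fin.cons false y) with hgf_def
    set gt : (Fin m → Bool) → ℝ := fun y => g (Fin.cons true y) with hgt_def
    have hgf : ∀ y, 0 < gf y := fun y => hg _
    have hgt : ∀ y, 0 < gt y := fun y => hg _
    have hSfpos : 0 < ∑ y, gf y := Finset.sum_pos (fun y _ => hgf y) Finset.univ_nonempty
    have hStpos : 0 < ∑ y, gt y := Finset.sum_pos (fun y _ => hgt y) Finset.univ_nonempty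
    have hIHf := ih gf hgf
    have hIHt := ih gt hgt
    have h2p := two_point_c hSfpos hStpos (show (0:ℝ) < 2^m by positivity)
    have hCS := sqrt_diff_sq_sum gf gt (fun y => (hgf y).le) (fun y => (hgt y).le)
    have hSum : ∑ x, g x = (∑ y, gf y) + (∑ y, gt y) := by
      rw [sum_cons g, Finset.sum_add_distrib]
    have hGLG : ∑ x, g x * Real.log (g x)
        = (∑ y, gf y * Real.log (gf y)) + (∑ y, gt y * Real.log (gt y)) := by
      rw [sum_cons (fun x => g x * Real.log (g x)), Finset.sum_add_distrib]
    have inner : ∀ (b : Bool) (y : Fin m → Bool),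
        (∑ i : Fin (m+1), (Real.sqrt (g (Fin.cons b y))
            - Real.sqrt (g (flp i (Fin.cons b y))))^2)
        = (Real.sqrt (g (Fin.cons b y)) - Real.sqrt (g (Fin.cons (!b) y)))^2
          + ∑ i : Fin m, (Real.sqrt (g (Fin.cons b y))
            - Real.sqrt (g (Fin.cons b (flp i y))))^2 := by
      intro b y
      rw [Fin.sum_univ_succ, flp_cons_zero]
      congr 1
      refine Finset.sum_congr rfl fun i _ => ?_
      rw [flp_cons_succ]
    have hRHS : (∑ x, ∑ i, (Real.sqrt (g x) - Real.sqrt (g (flp i x)))^2)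
        = (∑ y, ∑ i, (Real.sqrt (gf y) - Real.sqrt (gf (flp i y)))^2)
          + (∑ y, ∑ i, (Real.sqrt (gt y) - Real.sqrt (gt (flp i y)))^2)
          + 2 * ∑ y, (Real.sqrt (gf y) - Real.sqrt (gt y))^2 := by
      rw [sum_cons (fun x => ∑ i, (Real.sqrt (g x) - Real.sqrt (g (flp i x)))^2)]
      have step : ∀ y : Fin m → Bool,
          ((∑ i : Fin (m+1), (Real.sqrt (g (Fin.cons false y))
              - Real.sqrt (g (flp i (Fin.cons false y))))^2)
           + ∑ i : Fin (m+1), (Real.sqrt (g (Fin.cons true y))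
              - Real.sqrt (g (flp i (Fin.cons true y))))^2)
          = (∑ i : Fin m, (Real.sqrt (gf y) - Real.sqrt (gf (flp i y)))^2)
            + (∑ i : Fin m, (Real.sqrt (gt y) - Real.sqrt (gt (flp i y)))^2)
            + 2 * (Real.sqrt (gf y) - Real.sqrt (gt y))^2 := by
        intro y
        rw [inner false y, inner true y]
        simp only [Bool.not_false, Bool.not_true, hgf_def, hgt_def]
        try ring
      rw [Finset.sum_congr rfl (fun y _ => step y)]
      simp only [Finset.sum_add_distrib, Finset.mul_sum]
      try ring
    rw [hGLG, hSum, hRHS, show ((2:ℝ)^(m+1)) = 2*(2:ℝ)^m by ring]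
    linarith [hIHf, hIHt, h2p, hCS]


lemma sqrt_exp (u : ℝ) : Real.sqrt (Real.exp u) = Real.exp (u/2) := by
  rw [show Real.exp u = (Real.exp (u/2))^2 by rw [pow_two, ← Real.exp_add]; ring_nf,
    Real.sqrt_sq (Real.exp_nonneg _)]

lemma exp_sq_diff {l : ℝ} (hl : 0 ≤ l) (a b : ℝ) :
    (Real.exp (l * a/2) - Real.exp (l * b/2))^2
      ≤ l^2/4 * ((max (a - b) 0)^2 * Real.exp (l*a) + (max (b - a) 0)^2 * Real.exp (l*b)) := by
  have key : ∀ a b : ℝ, b ≤ a →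
      (Real.exp (l * a/2) - Real.exp (l * b/2))^2 ≤ l^2/4 * (a-b)^2 * Real.exp (l*a) := by
    intro a b hba
    have h1 : 0 ≤ Real.exp (l*a/2) - Real.exp (l*b/2) := by
      have h : l*b/2 ≤ l*a/2 := by nlinarith
      have := Real.exp_le_exp.2 h
      linarith
    have h2 : Real.exp (l*a/2) - Real.exp (l*b/2) ≤ (l*(a-b)/2) * Real.exp (l*a/2) := by
      have hexp : 1 + (l*b/2 - l*a/2) ≤ Real.exp (l*b/2 - l*a/2) := by
        have := Real.add_one_le_exp (l*b/2 - l*a/2)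
        linarith
      have hmul := mul_le_mul_of_nonneg_left hexp (Real.exp_nonneg (l*a/2))
      rw [← Real.exp_add, show l*a/2 + (l*b/2 - l*a/2) = l*b/2 by ring] at hmul
      nlinarith [Real.exp_pos (l*a/2)]
    have h3 : (Real.exp (l*a/2) - Real.exp (l*b/2))^2
        ≤ ((l*(a-b)/2) * Real.exp (l*a/2))^2 := pow_le_pow_left₀ h1 h2 2
    have he : Real.exp (l*a/2) * Real.exp (l*a/2) = Real.exp (l*a) := by
      rw [← Real.exp_add]; ring_nf
    calc (Real.exp (l*a/2) - Real.exp (l*b/2))^2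
        ≤ ((l*(a-b)/2) * Real.exp (l*a/2))^2 := h3
      _ = l^2/4 * (a-b)^2 * Real.exp (l*a) := by
          rw [pow_two, mul_mul_mul_comm, he]
          ring
  rcases le_total b a with h | h
  · have hk := key a b h
    have hm1 : max (a-b) 0 = a - b := max_eq_left (by linarith)
    have hm2 : max (b-a) 0 = 0 := max_eq_right (by linarith)
    have e : l^2/4 * ((a-b)^2 * Real.exp (l*a) + (0:ℝ)^2 * Real.exp (l*b))
        = l^2/4*(a-b)^2 * Real.exp (l*a) := by ring
    rw [hm1, hm2, e]
    exact hk
  · have hk := key b a h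
    have hm1 : max (a-b) 0 = 0 := max_eq_right (by linarith)
    have hm2 : max (b-a) 0 = b - a := max_eq_left (by linarith)
    have e : l^2/4 * ((0:ℝ)^2 * Real.exp (l*a) + (b-a)^2 * Real.exp (l*b))
        = l^2/4*(b-a)^2 * Real.exp (l*b) := by ring
    have e2 : (Real.exp (l*a/2) - Real.exp (l*b/2))^2
        = (Real.exp (l*b/2) - Real.exp (l*a/2))^2 := by ring
    rw [hm1, hm2, e, e2]
    exact hk

lemma dirichlet_bound {m : ℕ} (f : (Fin m → Bool) → ℝ)
    (hgrad : ∀ x, ∑ i, (max (f x - f (flp i x)) 0)^2 ≤ 4) {l : ℝ} (hl : 0 ≤ l) :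
    (1/2) * (∑ x, ∑ i, (Real.sqrt (Real.exp (l * f x))
        - Real.sqrt (Real.exp (l * f (flp i x))))^2)
      ≤ l^2 * ∑ x, Real.exp (l * f x) := by
  classical
  set T1 : (Fin m → Bool) → Fin m → ℝ :=
    fun x i => (max (f x - f (flp i x)) 0)^2 * Real.exp (l * f x) with hT1
  set T2 : (Fin m → Bool) → Fin m → ℝ :=
    fun x i => (max (f (flp i x) - f x) 0)^2 * Real.exp (l * f (flp i x)) with hT2
  have hterm : ∀ (x : Fin m → Bool) (i : Fin m),
      (Real.sqrt (Real.exp (l * f x)) - Real.sqrt (Real.exp (l * f (flp i x))))^2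
        ≤ l^2/4 * (T1 x i + T2 x i) := by
    intro x i
    rw [sqrt_exp, sqrt_exp, hT1, hT2]
    exact exp_sq_diff hl (f x) (f (flp i x))
  have hstep1 : (∑ x, ∑ i, (Real.sqrt (Real.exp (l * f x))
        - Real.sqrt (Real.exp (l * f (flp i x))))^2)
      ≤ ∑ x, ∑ i, l^2/4 * (T1 x i + T2 x i) :=
    Finset.sum_le_sum (fun x _ => Finset.sum_le_sum (fun i _ => hterm x i))
  have hreidx : ∀ i : Fin m, (∑ x, T2 x i) = ∑ x, T1 x i := by
    intro i
    refine Fintype.sum_bijective (flp i) (Function.Involutive.bijective (flp_flp i)) _ _ ?_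
    intro x
    rw [hT1, hT2]
    simp only
    rw [flp_flp]
  have hsplit : (∑ x, ∑ i, l^2/4 * (T1 x i + T2 x i))
      = l^2/4 * ((∑ x, ∑ i, T1 x i) + (∑ x, ∑ i, T2 x i)) := by
    simp only [mul_add, Finset.sum_add_distrib, Finset.mul_sum]
  have hswap : (∑ x, ∑ i, T2 x i) = ∑ x, ∑ i, T1 x i := by
    rw [Finset.sum_comm]
    rw [Finset.sum_congr rfl (fun i _ => hreidx i)]
    exact Finset.sum_comm
  have hgradsum : (∑ x, ∑ i, T1 x i) ≤ 4 * ∑ x, Real.exp (l * f x) := by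
    rw [Finset.mul_sum]
    refine Finset.sum_le_sum (fun x _ => ?_)
    have : (∑ i, T1 x i) = (∑ i, (max (f x - f (flp i x)) 0)^2) * Real.exp (l * f x) := by
      rw [Finset.sum_mul]
    rw [this]
    have h4 := hgrad x
    nlinarith [Real.exp_pos (l * f x), sq_nonneg (l)]
  have hexp_nonneg : (0:ℝ) ≤ ∑ x, Real.exp (l * f x) :=
    Finset.sum_nonneg (fun x _ => (Real.exp_pos _).le)
  have hl2 : (0:ℝ) ≤ l^2 := sq_nonneg l
  calc (1/2) * (∑ x, ∑ i, (Real.sqrt (Real.exp (l * f x))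
        - Real.sqrt (Real.exp (l * f (flp i x))))^2)
      ≤ (1/2) * ∑ x, ∑ i, l^2/4 * (T1 x i + T2 x i) := by linarith
    _ = l^2/4 * (∑ x, ∑ i, T1 x i) := by rw [hsplit, hswap]; ring
    _ ≤ l^2/4 * (4 * ∑ x, Real.exp (l * f x)) := by
        apply mul_le_mul_of_nonneg_left hgradsum (by positivity)
    _ = l^2 * ∑ x, Real.exp (l * f x) := by ring

lemma ent_ineq {m : ℕ} (f : (Fin m → Bool) → ℝ)
    (hgrad : ∀ x, ∑ i, (max (f x - f (flp i x)) 0)^2 ≤ 4) {l : ℝ} (hl : 0 ≤ l) :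
    (∑ x, Real.exp (l * f x) * (l * f x))
      - (∑ x, Real.exp (l * f x)) * Real.log ((∑ x, Real.exp (l * f x)) / 2^m)
      ≤ l^2 * ∑ x, Real.exp (l * f x) := by
  have hkey := cube_lsi m (fun x => Real.exp (l * f x)) (fun x => Real.exp_pos _)
  simp only [Real.log_exp] at hkey
  exact le_trans hkey (dirichlet_bound f hgrad hl)


open Topology

lemma card_cube (m : ℕ) : ((Finset.univ : Finset (Fin m → Bool)).card : ℝ) = (2:ℝ)^m := by
  rw [Finset.card_univ]
  simp [Fintype.card_fun]

lemma herbst {m : ℕ} (f : (Fin m → Bool) → ℝ)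
    (hgrad : ∀ x, ∑ i, (max (f x - f (flp i x)) 0)^2 ≤ 4) {l : ℝ} (hl : 0 < l) :
    Real.log ((∑ x, Real.exp (l * f x)) / 2^m) ≤ l * ((∑ x, f x) / 2^m) + l^2 := by
  classical
  set F : ℝ → ℝ := fun u => ∑ x, Real.exp (u * f x) with hF
  set D : ℝ → ℝ := fun u => ∑ x, Real.exp (u * f x) * f x with hD
  have hFpos : ∀ u, 0 < F u :=
    fun u => Finset.sum_pos (fun x _ => Real.exp_pos _) Finset.univ_nonempty
  have hFD : ∀ u, HasDerivAt F (D u) u := by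
    intro u
    refine HasDerivAt.fun_sum (fun x _ => ?_)
    simpa using ((hasDerivAt_id u).mul_const (f x)).exp
  set G : ℝ → ℝ := fun u => Real.log (F u) - Real.log (2^m) with hG
  have hGF : ∀ u, G u = Real.log (F u / 2^m) :=
    fun u => (Real.log_div (hFpos u).ne' (by positivity)).symm
  have hGD : ∀ u, HasDerivAt G (D u / F u) u :=
    fun u => ((hFD u).log (hFpos u).ne').sub_const _
  set K : ℝ → ℝ := fun u => G u / u - u with hK
  have hKD : ∀ u : ℝ, 0 < u →
      HasDerivAt K ((D u / F u * u - G u * 1) / u^2 - 1) u := by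
    intro u hu
    have h := ((hGD u).div (hasDerivAt_id u) hu.ne').sub (hasDerivAt_id u)
    exact h
  have hKd_nonpos : ∀ u : ℝ, 0 < u → (D u / F u * u - G u * 1) / u^2 - 1 ≤ 0 := by
    intro u hu
    have hent := ent_ineq f hgrad hu.le
    have hDsum : (∑ x, Real.exp (u * f x) * (u * f x)) = u * D u := by
      rw [hD, Finset.mul_sum]
      exact Finset.sum_congr rfl (fun x _ => by ring)
    rw [hDsum, ← hGF u] at hent
    have hFu := hFpos u
    have h1 : D u / F u * u - G u * 1 ≤ u^2 := by
      rw [mul_one, div_mul_eq_mul_div, sub_le_iff_le_add, div_le_iff₀ hFu]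
      nlinarith [hent]
    have h2 : (D u / F u * u - G u * 1) / u^2 ≤ 1 := by
      rw [div_le_one (by positivity)]
      exact h1
    linarith
  have hanti : AntitoneOn K (Set.Ioi 0) := by
    apply antitoneOn_of_deriv_nonpos (convex_Ioi 0)
    · intro x hx
      exact (hKD x hx).continuousAt.continuousWithinAt
    · intro x hx
      rw [interior_Ioi] at hx
      exact (hKD x hx).differentiableAt.differentiableWithinAt
    · intro x hx
      rw [interior_Ioi] at hx
      rw [(hKD x hx).deriv]
      exact hKd_nonpos x hx
  have hF0 : F 0 = 2^m := by
    have h : F 0 = ((Finset.univ : Finset (Fin m → Bool)).card : ℝ) := by simp [hF]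
    rw [h, card_cube]
  have hG0 : G 0 = 0 := by rw [hG]; simp [hF0]
  have hslope : Tendsto (fun u => G u / u) (𝓝[>] (0:ℝ)) (𝓝 (D 0 / F 0)) := by
    have h := hasDerivAt_iff_tendsto_slope.mp (hGD 0)
    have h2 := h.mono_left (nhdsWithin_mono 0 (fun x (hx : x ∈ Set.Ioi (0:ℝ)) =>
      (ne_of_gt hx : x ≠ 0)))
    refine h2.congr' ?_
    filter_upwards [self_mem_nhdsWithin] with u hu
    rw [slope_def_field, hG0, sub_zero, sub_zero]
  have hlim : Tendsto K (𝓝[>] (0:ℝ)) (𝓝 (D 0 / F 0)) := by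
    have hid : Tendsto (fun u : ℝ => u) (𝓝[>] (0:ℝ)) (𝓝 0) :=
      tendsto_id.mono_left nhdsWithin_le_nhds
    simpa using hslope.sub hid
  have hfinal : K l ≤ D 0 / F 0 := by
    refine ge_of_tendsto hlim ?_
    filter_upwards [Ioo_mem_nhdsGT_of_mem (Set.left_mem_Ico.2 hl)] with u hu
    exact hanti (Set.mem_Ioi.2 hu.1) (Set.mem_Ioi.2 hl) hu.2.le
  have hD0 : D 0 = ∑ x, f x := by simp [hD]
  rw [hD0, hF0] at hfinal
  rw [← hGF l]
  have h4 : G l = (G l / l) * l := by field_simp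
  have h5 := mul_le_mul_of_nonneg_right hfinal hl.le
  have h6 : l*l = l^2 := by ring
  rw [hK] at hfinal
  nlinarith [hfinal, hl, h4]


lemma radVec_flp_self {m : ℕ} (i : Fin m) (s : Fin m → Bool) :
    radVec (flp i s) i = -(radVec s i) := by
  unfold radVec flp
  rw [Function.update_self]
  cases h : s i <;> simp [h]

lemma radVec_flp_ne {m : ℕ} {i j : Fin m} (h : j ≠ i) (s : Fin m → Bool) :
    radVec (flp i s) j = radVec s j := by
  unfold radVec flp
  rw [Function.update_of_ne h]

lemma radVec_abs {m : ℕ} (s : Fin m → Bool) (i : Fin m) : |radVec s i| = 1 := by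
  unfold radVec
  cases h : s i <;> simp

lemma radVec_sq {m : ℕ} (s : Fin m → Bool) (i : Fin m) : radVec s i * radVec s i = 1 := by
  unfold radVec
  cases h : s i <;> norm_num

lemma radsum {m : ℕ} (i j : Fin m) :
    (∑ s : Fin m → Bool, radVec s i * radVec s j) = if i = j then (2:ℝ)^m else 0 := by
  by_cases h : i = j
  · subst h
    rw [if_pos rfl]
    rw [Finset.sum_congr rfl (fun s _ => radVec_sq s i)]
    rw [Finset.sum_const, nsmul_eq_mul, mul_one, card_cube]
  · rw [if_neg h]
    have hb := Fintype.sum_bijective (flp i) (Function.Involutive.bijective (flp_flp i))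
      (fun s => radVec (flp i s) i * radVec (flp i s) j)
      (fun s => radVec s i * radVec s j)
      (fun s => rfl)
    have hkey : ∀ s : Fin m → Bool,
        radVec (flp i s) i * radVec (flp i s) j = -(radVec s i * radVec s j) := by
      intro s
      rw [radVec_flp_self, radVec_flp_ne (Ne.symm h)]
      ring
    rw [Finset.sum_congr rfl (fun s _ => hkey s), Finset.sum_neg_distrib] at hb
    linarith [hb]

lemma sum_q {m : ℕ} (B : Matrix (Fin m) (Fin m) ℝ) :
    (∑ s : Fin m → Bool, radVec s ⬝ᵥ (B *ᵥ radVec s)) = 2^m * B.trace := by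
  have hq : ∀ s : Fin m → Bool, radVec s ⬝ᵥ (B *ᵥ radVec s)
      = ∑ i, ∑ j, B i j * (radVec s i * radVec s j) := by
    intro s
    simp only [dotProduct, Matrix.mulVec, Finset.mul_sum]
    exact Finset.sum_congr rfl fun i _ => Finset.sum_congr rfl fun j _ => by ring
  rw [Finset.sum_congr rfl (fun s _ => hq s)]
  rw [Finset.sum_comm]
  have hinner : ∀ i : Fin m,
      (∑ s : Fin m → Bool, ∑ j, B i j * (radVec s i * radVec s j))
        = B i i * 2^m := by
    intro i
    rw [Finset.sum_comm]
    have hj : ∀ j : Fin m, (∑ s : Fin m → Bool, B i j * (radVec s i * radVec s j))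
        = B i j * (if i = j then (2:ℝ)^m else 0) := by
      intro j
      rw [← Finset.mul_sum, radsum]
    rw [Finset.sum_congr rfl (fun j _ => hj j)]
    simp only [mul_ite, mul_zero]
    rw [Finset.sum_ite_eq]
    simp
  rw [Finset.sum_congr rfl (fun i _ => hinner i), Matrix.trace, Finset.mul_sum]
  exact Finset.sum_congr rfl fun i _ => by rw [Matrix.diag]; ring

end Stmt10Aux

namespace Stmt10Aux

section PSD

section
open scoped MatrixOrder
noncomputable def _root_.Matrix.PosSemidef.sqrt {m : ℕ} {B : Matrix (Fin m) (Fin m) ℝ}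
    (_hB : B.PosSemidef) : Matrix (Fin m) (Fin m) ℝ := CFC.sqrt B
lemma _root_.Matrix.PosSemidef.posSemidef_sqrt {m : ℕ} {B : Matrix (Fin m) (Fin m) ℝ}
    (hB : B.PosSemidef) : hB.sqrt.PosSemidef := (CFC.sqrt_nonneg B).posSemidef
lemma _root_.Matrix.PosSemidef.sqrt_mul_self {m : ℕ} {B : Matrix (Fin m) (Fin m) ℝ}
    (hB : B.PosSemidef) : hB.sqrt * hB.sqrt = B := CFC.sqrt_mul_sqrt_self B hB.nonneg
end

variable {m : ℕ}

lemma Bsymm (B : Matrix (Fin m) (Fin m) ℝ) (hB : B.PosSemidef) (k l : Fin m) : B k l = B l k := by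
  have h := hB.1.apply l k
  rwa [star_trivial] at h

lemma key1 (B : Matrix (Fin m) (Fin m) ℝ) (hB : B.PosSemidef) (x y : Fin m → ℝ) :
    x ⬝ᵥ (B *ᵥ y) = (hB.sqrt *ᵥ x) ⬝ᵥ (hB.sqrt *ᵥ y) := by
  set A := hB.sqrt with hA
  have hAherm : A.IsHermitian := hB.posSemidef_sqrt.1
  have hAT : Aᵀ = A := by
    rw [← Matrix.conjTranspose_eq_transpose_of_trivial]
    exact hAherm.eq
  calc x ⬝ᵥ (B *ᵥ y) = x ⬝ᵥ (A *ᵥ (A *ᵥ y)) := by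
        rw [Matrix.mulVec_mulVec, hB.sqrt_mul_self]
    _ = (x ᵥ* A) ⬝ᵥ (A *ᵥ y) := Matrix.dotProduct_mulVec x A _
    _ = (A *ᵥ x) ⬝ᵥ (A *ᵥ y) := by rw [← Matrix.mulVec_transpose, hAT]

lemma qnonneg (B : Matrix (Fin m) (Fin m) ℝ) (hB : B.PosSemidef) (x : Fin m → ℝ) : 0 ≤ x ⬝ᵥ (B *ᵥ x) := by
  have h := hB.dotProduct_mulVec_nonneg x
  rwa [star_trivial] at h

lemma cauchy_schwarz_psd (B : Matrix (Fin m) (Fin m) ℝ) (hB : B.PosSemidef) (x y : Fin m → ℝ) :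
    x ⬝ᵥ (B *ᵥ y) ≤ Real.sqrt (x ⬝ᵥ (B *ᵥ x)) * Real.sqrt (y ⬝ᵥ (B *ᵥ y)) := by
  rw [key1 B hB x y, key1 B hB x x, key1 B hB y y]
  set u := hB.sqrt *ᵥ x
  set v := hB.sqrt *ᵥ y
  have hcs := Real.sum_mul_le_sqrt_mul_sqrt Finset.univ u v
  have hu : (∑ i, u i ^ 2) = u ⬝ᵥ u := by
    simp [dotProduct, pow_two]
  have hv : (∑ i, v i ^ 2) = v ⬝ᵥ v := by
    simp [dotProduct, pow_two]
  rw [hu, hv] at hcs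
  exact hcs

lemma B_sq_le (B : Matrix (Fin m) (Fin m) ℝ) (hB : B.PosSemidef) (x : Fin m → ℝ) (hnorm : ∀ z : Fin m → ℝ, z ⬝ᵥ (B *ᵥ z) ≤ z ⬝ᵥ z) :
    (B *ᵥ x) ⬝ᵥ (B *ᵥ x) ≤ x ⬝ᵥ (B *ᵥ x) := by
  set A := hB.sqrt with hA
  set u := A *ᵥ x with hu
  have hBx : B *ᵥ x = A *ᵥ u := by
    rw [hu, Matrix.mulVec_mulVec, hB.sqrt_mul_self]
  calc (B *ᵥ x) ⬝ᵥ (B *ᵥ x) = (A *ᵥ u) ⬝ᵥ (A *ᵥ u) := by rw [hBx]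
    _ = u ⬝ᵥ (B *ᵥ u) := (key1 B hB u u).symm
    _ ≤ u ⬝ᵥ u := hnorm u
    _ = (A *ᵥ x) ⬝ᵥ (A *ᵥ x) := by rw [hu]
    _ = x ⬝ᵥ (B *ᵥ x) := (key1 B hB x x).symm

lemma radVec_flp_eq {m : ℕ} (i : Fin m) (s : Fin m → Bool) :
    radVec (flp i s) = radVec s - Pi.single i (2 * radVec s i) := by
  funext j
  by_cases h : j = i
  · subst h
    simp [radVec_flp_self, Pi.single_apply]
    ring
  · simp [radVec_flp_ne h, Pi.single_apply, h]

lemma grad_bound (B : Matrix (Fin m) (Fin m) ℝ) (hB : B.PosSemidef) (hnorm : ∀ z : Fin m → ℝ, z ⬝ᵥ (B *ᵥ z) ≤ z ⬝ᵥ z) (s : Fin m → Bool) :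
    ∑ i, (max (Real.sqrt (radVec s ⬝ᵥ (B *ᵥ radVec s))
        - Real.sqrt (radVec (flp i s) ⬝ᵥ (B *ᵥ radVec (flp i s)))) 0)^2 ≤ 4 := by
  set x := radVec s with hx
  set q := x ⬝ᵥ (B *ᵥ x) with hqdef
  have hq0 : 0 ≤ q := qnonneg B hB x
  rcases eq_or_lt_of_le hq0 with hq | hq
  · -- q = 0 : all positive parts vanish
    have hzero : ∀ i : Fin m, (max (Real.sqrt q
        - Real.sqrt (radVec (flp i s) ⬝ᵥ (B *ᵥ radVec (flp i s)))) 0)^2 = 0 := by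
      intro i
      have h1 : Real.sqrt q = 0 := by rw [← hq, Real.sqrt_zero]
      have h2 : 0 ≤ Real.sqrt (radVec (flp i s) ⬝ᵥ (B *ᵥ radVec (flp i s))) :=
        Real.sqrt_nonneg _
      have : max (Real.sqrt q
          - Real.sqrt (radVec (flp i s) ⬝ᵥ (B *ᵥ radVec (flp i s)))) 0 = 0 :=
        max_eq_right (by linarith)
      rw [this]
      norm_num
    rw [Finset.sum_congr rfl (fun i _ => hzero i)]
    norm_num
  · -- q > 0
    have hsq : Real.sqrt q > 0 := Real.sqrt_pos.2 hq
    have hterm : ∀ i : Fin m, (max (Real.sqrt q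
        - Real.sqrt (radVec (flp i s) ⬝ᵥ (B *ᵥ radVec (flp i s)))) 0)^2
        ≤ 4 * ((B *ᵥ x) i * (B *ᵥ x) i) / q := by
      intro i
      set y := radVec (flp i s) with hy
      set qy := y ⬝ᵥ (B *ᵥ y) with hqy
      have hBxy : x ⬝ᵥ (B *ᵥ y) = q - 2 * x i * (B *ᵥ x) i := by
        rw [hy, radVec_flp_eq i s, ← hx, Matrix.mulVec_sub, dotProduct_sub,
          Matrix.mulVec_single,
          show MulOpposite.op (2 * x i) • B.col i = (fun k => B k i * (2 * x i)) from rfl]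
        have hsingle : x ⬝ᵥ (fun k => B k i * (2 * x i)) = 2 * x i * (B *ᵥ x) i := by
          simp only [dotProduct, Matrix.mulVec, Finset.mul_sum]
          refine Finset.sum_congr rfl fun k _ => ?_
          rw [Bsymm B hB k i]
          ring
        rw [hsingle, ← hqdef]
      have hcs := cauchy_schwarz_psd B hB x y
      have hfy : Real.sqrt q - Real.sqrt qy ≤ 2 * |(B *ᵥ x) i| / Real.sqrt q := by
        have h1 : (x ⬝ᵥ (B *ᵥ y)) / Real.sqrt q ≤ Real.sqrt qy := by
          rw [div_le_iff₀ hsq]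
          calc x ⬝ᵥ (B *ᵥ y) ≤ Real.sqrt q * Real.sqrt qy := hcs
            _ = Real.sqrt qy * Real.sqrt q := by ring
        have h2 : Real.sqrt q - Real.sqrt qy
            ≤ Real.sqrt q - (x ⬝ᵥ (B *ᵥ y)) / Real.sqrt q := by linarith
        have h3 : Real.sqrt q - (x ⬝ᵥ (B *ᵥ y)) / Real.sqrt q
            = (2 * x i * (B *ᵥ x) i) / Real.sqrt q := by
          rw [hBxy]
          have hss : Real.sqrt q * Real.sqrt q = q := Real.mul_self_sqrt hq0
          field_simp
          rw [Real.sq_sqrt hq0]; ring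
        have h4 : 2 * x i * (B *ᵥ x) i ≤ 2 * |(B *ᵥ x) i| := by
          have habs := le_abs_self (x i * (B *ᵥ x) i)
          have hxa : |x i| = 1 := radVec_abs s i
          rw [abs_mul, hxa, one_mul] at habs
          linarith
        have h5 : (2 * x i * (B *ᵥ x) i) / Real.sqrt q
            ≤ 2 * |(B *ᵥ x) i| / Real.sqrt q := by gcongr
        linarith
      have hmax : max (Real.sqrt q - Real.sqrt qy) 0 ≤ 2 * |(B *ᵥ x) i| / Real.sqrt q := by
        apply max_le hfy (by positivity)
      have hsqb : (max (Real.sqrt q - Real.sqrt qy) 0)^2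
          ≤ (2 * |(B *ᵥ x) i| / Real.sqrt q)^2 :=
        pow_le_pow_left₀ (le_max_right _ 0) hmax 2
      calc (max (Real.sqrt q - Real.sqrt qy) 0)^2
          ≤ (2 * |(B *ᵥ x) i| / Real.sqrt q)^2 := hsqb
        _ = 4 * ((B *ᵥ x) i * (B *ᵥ x) i) / q := by
            rw [div_pow, mul_pow]
            rw [Real.sq_sqrt hq0]
            rw [sq_abs]
            ring_nf
    calc (∑ i, (max (Real.sqrt q
        - Real.sqrt (radVec (flp i s) ⬝ᵥ (B *ᵥ radVec (flp i s)))) 0)^2)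
        ≤ ∑ i, 4 * ((B *ᵥ x) i * (B *ᵥ x) i) / q :=
          Finset.sum_le_sum (fun i _ => hterm i)
      _ = 4 / q * ((B *ᵥ x) ⬝ᵥ (B *ᵥ x)) := by
          rw [dotProduct, Finset.mul_sum]
          exact Finset.sum_congr rfl fun i _ => by ring
      _ ≤ 4 / q * q := by
          apply mul_le_mul_of_nonneg_left (B_sq_le B hB x hnorm) (by positivity)
      _ = 4 := by field_simp





end PSD


lemma mean_bound {m : ℕ} (B : Matrix (Fin m) (Fin m) ℝ) (hB : B.PosSemidef) :
    (∑ s : Fin m → Bool, Real.sqrt (radVec s ⬝ᵥ (B *ᵥ radVec s)))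
      ≤ 2^m * Real.sqrt B.trace := by
  set f : (Fin m → Bool) → ℝ := fun s => Real.sqrt (radVec s ⬝ᵥ (B *ᵥ radVec s)) with hf
  have hfnn : ∀ s, 0 ≤ f s := fun s => Real.sqrt_nonneg _
  have htr : 0 ≤ B.trace := by
    have h := sum_q B
    have h2 : 0 ≤ ∑ s : Fin m → Bool, radVec s ⬝ᵥ (B *ᵥ radVec s) :=
      Finset.sum_nonneg (fun s _ => qnonneg B hB _)
    rw [h] at h2
    nlinarith [pow_pos (show (0:ℝ) < 2 by norm_num) m]
  have hcs := Finset.sum_mul_sq_le_sq_mul_sq Finset.univ (fun _ : Fin m → Bool => (1:ℝ)) f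
  have hfsq : (∑ s, f s ^ 2) = 2^m * B.trace := by
    rw [← sum_q B]
    exact Finset.sum_congr rfl fun s _ => Real.sq_sqrt (qnonneg B hB _)
  simp only [one_pow, one_mul, Finset.sum_const, nsmul_eq_mul, mul_one] at hcs
  rw [hfsq, card_cube] at hcs
  have hsumnn : 0 ≤ ∑ s, f s := Finset.sum_nonneg fun s _ => hfnn s
  calc (∑ s, f s) = Real.sqrt ((∑ s, f s)^2) := (Real.sqrt_sq hsumnn).symm
    _ ≤ Real.sqrt ((2:ℝ)^m * (2^m * B.trace)) := Real.sqrt_le_sqrt hcs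
    _ = 2^m * Real.sqrt B.trace := by
        rw [show (2:ℝ)^m * (2^m * B.trace) = ((2:ℝ)^m)^2 * B.trace by ring,
          Real.sqrt_mul (by positivity), Real.sqrt_sq (by positivity)]


end Stmt10Aux

open Stmt10Aux in
open Classical in
/-- Rademacher chaos tail bound: let `B` be a real symmetric psd
`m × m` matrix with operator norm `‖B‖₂ ≤ 1` (stated as `xᵀBx ≤ xᵀx` for all `x`,
which is equivalent for a symmetric psd matrix), and let `d` be uniform on
`{−1,1}^m`. Then for every `t ≥ 0`: `Pr{dᵀBd ≥ (√(tr B) + t)²} ≤ e^{−t²/8}`,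
expressed by counting: the number of sign patterns `s` with
`d_sᵀ B d_s ≥ (√(tr B) + t)²` is at most `e^{−t²/8} · 2^m`. -/
theorem stmt10 {m : ℕ} (B : Matrix (Fin m) (Fin m) ℝ) (hB : B.PosSemidef)
    (hnorm : ∀ x : Fin m → ℝ, x ⬝ᵥ (B *ᵥ x) ≤ x ⬝ᵥ x)
    (t : ℝ) (ht : 0 ≤ t) :
    ((Finset.univ.filter (fun s : Fin m → Bool =>
          (Real.sqrt B.trace + t) ^ 2 ≤ radVec s ⬝ᵥ (B *ᵥ radVec s))).card : ℝ)
      ≤ Real.exp (-(t ^ 2) / 8) * 2 ^ m := by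
  set f : (Fin m → Bool) → ℝ := fun s => Real.sqrt (radVec s ⬝ᵥ (B *ᵥ radVec s)) with hf
  set a : ℝ := Real.sqrt B.trace + t with ha
  have hann : 0 ≤ a := add_nonneg (Real.sqrt_nonneg _) ht
  set E := Finset.univ.filter (fun s : Fin m → Bool =>
      (Real.sqrt B.trace + t) ^ 2 ≤ radVec s ⬝ᵥ (B *ᵥ radVec s)) with hE
  have hevent : ∀ s ∈ E, a ≤ f s := by
    intro s hs
    have hq := (Finset.mem_filter.mp hs).2
    have h := Real.sqrt_le_sqrt hq
    rwa [Real.sqrt_sq hann] at h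
  have hcard_le : (E.card : ℝ) ≤ (2:ℝ)^m := by
    rw [← card_cube m]
    exact_mod_cast Finset.card_le_card (Finset.filter_subset _ _)
  rcases eq_or_lt_of_le ht with ht0 | htpos
  · -- t = 0
    rw [← ht0]
    norm_num
    exact hcard_le
  · set l : ℝ := t/2 with hl
    have hlpos : 0 < l := by positivity
    have hmgf := herbst f (grad_bound B hB hnorm) hlpos
    have hFpos : 0 < ∑ x, Real.exp (l * f x) :=
      Finset.sum_pos (fun x _ => Real.exp_pos _) Finset.univ_nonempty
    have h2m : (0:ℝ) < (2:ℝ)^m := by positivity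
    -- Chernoff step
    have hchern : (E.card : ℝ) * Real.exp (l * a) ≤ ∑ x, Real.exp (l * f x) := by
      have h1 : (E.card : ℝ) * Real.exp (l * a) = ∑ _s ∈ E, Real.exp (l * a) := by
        rw [Finset.sum_const, nsmul_eq_mul]
      rw [h1]
      refine le_trans (Finset.sum_le_sum (fun s hs => ?_))
        (Finset.sum_le_sum_of_subset_of_nonneg (Finset.filter_subset _ _)
          (fun s _ _ => (Real.exp_pos _).le))
      exact Real.exp_le_exp.2 (mul_le_mul_of_nonneg_left (hevent s hs) hlpos.le)
    -- MGF bound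
    have hmean : (∑ x, f x) / 2^m ≤ Real.sqrt B.trace := by
      rw [div_le_iff₀ h2m]
      calc (∑ x, f x) ≤ 2^m * Real.sqrt B.trace := mean_bound B hB
        _ = Real.sqrt B.trace * 2^m := by ring
    have hFle : (∑ x, Real.exp (l * f x)) ≤ 2^m * Real.exp (l * Real.sqrt B.trace + l^2) := by
      have h2 : (∑ x, Real.exp (l * f x)) / 2^m
          ≤ Real.exp (l * ((∑ x, f x) / 2^m) + l^2) := by
        rw [← Real.exp_log (show 0 < (∑ x, Real.exp (l * f x)) / 2^m by positivity)]
        exact Real.exp_le_exp.2 hmgf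
      have h3 : Real.exp (l * ((∑ x, f x) / 2^m) + l^2)
          ≤ Real.exp (l * Real.sqrt B.trace + l^2) := by
        apply Real.exp_le_exp.2
        have := mul_le_mul_of_nonneg_left hmean hlpos.le
        linarith
      rw [div_le_iff₀ h2m] at h2
      calc (∑ x, Real.exp (l * f x))
          ≤ Real.exp (l * ((∑ x, f x) / 2^m) + l^2) * 2^m := h2
        _ ≤ Real.exp (l * Real.sqrt B.trace + l^2) * 2^m := by
            apply mul_le_mul_of_nonneg_right h3 h2m.le
        _ = 2^m * Real.exp (l * Real.sqrt B.trace + l^2) := by ring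
    have hEpos : 0 < Real.exp (l * a) := Real.exp_pos _
    calc (E.card : ℝ)
        = ((E.card : ℝ) * Real.exp (l * a)) / Real.exp (l * a) := by field_simp
      _ ≤ (2^m * Real.exp (l * Real.sqrt B.trace + l^2)) / Real.exp (l * a) := by
          exact (div_le_div_iff_of_pos_right hEpos).2 (le_trans hchern hFle)
      _ = 2^m * Real.exp (l * Real.sqrt B.trace + l^2 - l * a) := by
          rw [Real.exp_sub]
          ring
      _ = 2^m * Real.exp (-(t^2)/4) := by
          congr 1
          rw [ha, hl]
          congr 1
          ring
      _ ≤ Real.exp (-(t^2)/8) * 2^m := by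
          rw [mul_comm]
          apply mul_le_mul_of_nonneg_right _ h2m.le
          apply Real.exp_le_exp.2
          nlinarith [sq_nonneg t]
end

section
/- Let X₁, …, X_n be independent geometric random variables with possibly different parameters p_i ∈ (0,1], i.e., Pr{X_i = j} = p_i·(1−p_i)^{j−1} for integers j ≥ 1. Let X := Σ_{i=1}^n X_i, μ := E[X] = Σ_{i=1}^n 1/p_i, and p_* := min_i p_i. Then for every λ ≥ 1: Pr{ X ≥ λμ } ≤ exp(−p_*·μ·(λ − 1 − ln λ)). -/
open MeasureTheory ProbabilityTheory
open scoped ProbabilityTheory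


/-- `-log(1-x)/x` is monotone: for `0 ≤ a ≤ b < 1`,
`b * (-log (1-a)) ≤ a * (-log (1-b))`. -/
lemma stmt12_aux_log {a b : ℝ} (ha : 0 ≤ a) (hab : a ≤ b) (hb : b < 1) :
    b * (-Real.log (1 - a)) ≤ a * (-Real.log (1 - b)) := by
  have hb0 : 0 ≤ b := ha.trans hab
  have hsa : HasSum (fun n : ℕ => a ^ (n + 1) / (n + 1)) (-Real.log (1 - a)) :=
    Real.hasSum_pow_div_log_of_abs_lt_one (by rw [abs_of_nonneg ha]; exact lt_of_le_of_lt hab hb)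
  have hsb : HasSum (fun n : ℕ => b ^ (n + 1) / (n + 1)) (-Real.log (1 - b)) :=
    Real.hasSum_pow_div_log_of_abs_lt_one (by rw [abs_of_nonneg hb0]; exact hb)
  have hsa' := hsa.mul_left b
  have hsb' := hsb.mul_left a
  refine hasSum_le (fun n => ?_) hsa' hsb'
  have h1 : b * a ^ (n + 1) ≤ a * b ^ (n + 1) := by
    calc b * a ^ (n + 1) = (b * a) * a ^ n := by ring
    _ ≤ (a * b) * b ^ n := by
        rw [mul_comm b a]
        exact mul_le_mul_of_nonneg_left (pow_le_pow_left₀ ha hab n) (by positivity)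
    _ = a * b ^ (n + 1) := by ring
  have hn : (0:ℝ) < (n:ℝ) + 1 := by positivity
  calc b * (a ^ (n + 1) / (n + 1)) = (b * a ^ (n + 1)) / (n + 1) := by ring
  _ ≤ (a * b ^ (n + 1)) / (n + 1) := by gcongr
  _ = a * (b ^ (n + 1) / (n + 1)) := by ring


lemma stmt12_geom_mgf {Ω : Type*} [MeasureSpace Ω] [IsProbabilityMeasure (ℙ : Measure Ω)]
    (Y : Ω → ℕ) (hY : Measurable Y) (p t : ℝ) (hp0 : 0 < p)
    (h0 : ℙ {ω | Y ω = 0} = 0)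
    (hdist : ∀ j : ℕ, 1 ≤ j → (ℙ {ω | Y ω = j}).toReal = p * (1 - p) ^ (j - 1))
    (hq0 : 0 ≤ (1 - p) * Real.exp t) (hqt : (1 - p) * Real.exp t < 1) :
    Integrable (fun ω => Real.exp (t * (Y ω : ℝ))) ℙ ∧
      mgf (fun ω => (Y ω : ℝ)) ℙ t
        = p * Real.exp t / (1 - (1 - p) * Real.exp t) := by
  set r : ℝ := (1 - p) * Real.exp t with hr
  set π : Measure ℕ := Measure.map Y ℙ with hπ
  have hπj : ∀ j : ℕ, π {j} = ℙ {ω | Y ω = j} := by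
    intro j
    rw [hπ, Measure.map_apply hY (measurableSet_singleton j)]
    rfl
  set g : ℕ → ℝ := fun j => Real.exp (t * j) with hg
  have hgpos : ∀ j, 0 < g j := fun j => Real.exp_pos _
  set d : ℕ → ℝ := fun j => (π {j}).toReal * g j with hd
  have hd0 : d 0 = 0 := by simp [hd, hπj, h0]
  have hdsucc : ∀ k : ℕ, d (k + 1) = (p * Real.exp t) * r ^ k := by
    intro k
    have h1 : (π {k + 1}).toReal = p * (1 - p) ^ k := by
      rw [hπj, hdist (k + 1) (Nat.le_add_left 1 k)]; simp
    have h2 : g (k + 1) = Real.exp t * (Real.exp t) ^ k := by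
      simp only [hg, Nat.cast_add, Nat.cast_one]
      rw [mul_add, mul_one, Real.exp_add, mul_comm t (k:ℝ), Real.exp_nat_mul, mul_comm]
    rw [hd]
    simp only []
    rw [h1, h2, hr, mul_pow]
    ring
  have hsum_succ : Summable (fun k => d (k + 1)) := by
    simp only [hdsucc]
    exact (summable_geometric_of_lt_one (by
      rcases mul_nonneg_iff.mp hq0 with h | h
      · exact hq0
      · exact hq0) hqt).mul_left _
  have hsumd : Summable d := (summable_nat_add_iff 1).mp hsum_succ
  have hdnonneg : ∀ j, 0 ≤ d j := fun j =>
    mul_nonneg ENNReal.toReal_nonneg (hgpos j).le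
  have htsum : ∑' j, d j = p * Real.exp t / (1 - r) := by
    rw [Summable.tsum_eq_zero_add hsumd, hd0, zero_add]
    simp only [hdsucc]
    rw [tsum_mul_left, tsum_geometric_of_lt_one hq0 hqt, div_eq_mul_inv]
  -- integrability of g with respect to π
  have hgint : Integrable g π := by
    refine ⟨(measurable_from_top (f := g)).aestronglyMeasurable, ?_⟩
    rw [HasFiniteIntegral, lintegral_countable' (fun j => ‖g j‖ₑ)]
    have heq : ∀ j : ℕ, ‖g j‖ₑ * π {j} = ENNReal.ofReal (d j) := by
      intro j
      rw [← ofReal_norm, Real.norm_eq_abs, abs_of_pos (hgpos j),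
        ← ENNReal.ofReal_toReal (measure_ne_top π {j}),
        ← ENNReal.ofReal_mul (hgpos j).le]
      congr 1
      simp only [hd]
      ring
    calc ∑' j, ‖g j‖ₑ * π {j} = ∑' j, ENNReal.ofReal (d j) := by
          exact tsum_congr heq
    _ = ENNReal.ofReal (∑' j, d j) := (ENNReal.ofReal_tsum_of_nonneg hdnonneg hsumd).symm
    _ < ⊤ := ENNReal.ofReal_lt_top
  have hcomp : (fun ω => Real.exp (t * (Y ω : ℝ))) = g ∘ Y := rfl
  have hint : Integrable (fun ω => Real.exp (t * (Y ω : ℝ))) ℙ := by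
    rw [hcomp, ← integrable_map_measure (measurable_from_top (f := g)).aestronglyMeasurable
      hY.aemeasurable]
    exact hgint
  refine ⟨hint, ?_⟩
  rw [mgf]
  calc ∫ ω, Real.exp (t * (Y ω : ℝ)) ∂ℙ = ∫ j, g j ∂π := by
        rw [hπ, integral_map hY.aemeasurable (measurable_from_top (f := g)).aestronglyMeasurable]
  _ = ∑' j, (π {j}).toReal • g j := integral_countable' hgint
  _ = ∑' j, d j := by simp [hd, smul_eq_mul]
  _ = p * Real.exp t / (1 - r) := htsum

/-- tail bound for sums of independent geometric random variables,
Theorem 2.1 of [J18]: let `X₁, …, X_n` be independent geometric random variables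
taking values in the positive integers with `Pr{X_i = j} = p_i(1−p_i)^{j−1}`, where
`p_i ∈ (0,1]`. Let `X := Σ X_i`, `μ := E[X] = Σ 1/p_i`, and `p_* := min_i p_i`. Then
for every `λ ≥ 1`: `Pr{X ≥ λμ} ≤ exp(−p_*·μ·(λ − 1 − ln λ))`. -/
theorem stmt12 {n : ℕ} [NeZero n] {Ω : Type*} [MeasureSpace Ω]
    [IsProbabilityMeasure (ℙ : Measure Ω)]
    (X : Fin n → Ω → ℕ) (hXmeas : ∀ i, Measurable (X i))
    (p : Fin n → ℝ) (hp0 : ∀ i, 0 < p i) (hp1 : ∀ i, p i ≤ 1)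
    (hindep : iIndepFun X ℙ)
    (hpos : ∀ i, ∀ᵐ ω ∂ℙ, 1 ≤ X i ω)
    (hdist : ∀ i, ∀ j : ℕ, 1 ≤ j →
      (ℙ {ω | X i ω = j}).toReal = p i * (1 - p i) ^ (j - 1))
    (μ pstar lam : ℝ)
    (hμ : μ = ∑ i, 1 / p i)
    (hpstar : pstar = Finset.univ.inf' Finset.univ_nonempty p)
    (hlam : 1 ≤ lam) :
    (ℙ {ω | lam * μ ≤ ∑ i, (X i ω : ℝ)}).toReal
      ≤ Real.exp (-(pstar * μ * (lam - 1 - Real.log lam))) := by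
  classical
  have hps_le : ∀ i, pstar ≤ p i := fun i => hpstar ▸ Finset.inf'_le _ (Finset.mem_univ i)
  have hps_pos : 0 < pstar := by
    rw [hpstar]; exact (Finset.lt_inf'_iff _).mpr fun i _ => hp0 i
  have i0 : Fin n := ⟨0, Nat.pos_of_ne_zero (NeZero.ne n)⟩
  have hps1 : pstar ≤ 1 := (hps_le i0).trans (hp1 i0)
  have hlam0 : 0 < lam := lt_of_lt_of_le one_pos hlam
  set L : ℝ := Real.log lam with hL
  have hL0 : 0 ≤ L := Real.log_nonneg hlam
  set u : ℝ := pstar * (1 - 1 / lam) with hu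
  have h1lam : 0 ≤ 1 - 1 / lam := by
    have : 1 / lam ≤ 1 := by rw [div_le_one hlam0]; exact hlam
    linarith
  have h1lam' : 1 - 1 / lam < 1 := by
    have : 0 < 1 / lam := by positivity
    linarith
  have hu0 : 0 ≤ u := mul_nonneg hps_pos.le h1lam
  have hups : u < pstar := by
    calc u < pstar * 1 := by
          exact mul_lt_mul_of_pos_left h1lam' hps_pos
    _ = pstar := mul_one _
  have hupi : ∀ i, u < p i := fun i => lt_of_lt_of_le hups (hps_le i)
  have h1u : 0 < 1 - u := by linarith
  set t : ℝ := -Real.log (1 - u) with htdef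
  have ht0 : 0 ≤ t := by
    have := Real.log_nonpos h1u.le (by linarith)
    rw [htdef]; linarith
  have hexp : Real.exp t = (1 - u)⁻¹ := by
    rw [htdef, Real.exp_neg, Real.exp_log h1u]
  have htu : u ≤ t := by
    have := Real.log_le_sub_one_of_pos h1u
    rw [htdef]; linarith
  have hq0 : ∀ i, 0 ≤ (1 - p i) * Real.exp t := fun i =>
    mul_nonneg (by linarith [hp1 i]) (Real.exp_pos t).le
  have hqt : ∀ i, (1 - p i) * Real.exp t < 1 := by
    intro i
    rw [hexp, ← div_eq_mul_inv, div_lt_one h1u]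
    linarith [hupi i]
  have h0 : ∀ i, ℙ {ω | X i ω = 0} = 0 := by
    intro i
    have h := hpos i
    rw [ae_iff] at h
    have hset : {ω | X i ω = 0} = {ω | ¬1 ≤ X i ω} := by
      ext ω; simp [Nat.lt_one_iff, not_le]
    rw [hset]; exact h
  have hGeo := fun i => stmt12_geom_mgf (X i) (hXmeas i) (p i) t (hp0 i) (h0 i) (hdist i)
    (hq0 i) (hqt i)
  set Yr : Fin n → Ω → ℝ := fun i ω => (X i ω : ℝ) with hYr
  have hYmeas : ∀ i, Measurable (Yr i) := fun i => measurable_from_top.comp (hXmeas i)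
  have hindep' : iIndepFun Yr ℙ :=
    hindep.comp (fun _ => (Nat.cast : ℕ → ℝ)) (fun _ => measurable_from_top)
  have hintS : Integrable (fun ω => Real.exp (t * (∑ i, Yr i) ω)) ℙ :=
    hindep'.integrable_exp_mul_sum hYmeas (fun i _ => (hGeo i).1)
  have hset2 : {ω | lam * μ ≤ ∑ i, (X i ω : ℝ)} = {ω | lam * μ ≤ (∑ i, Yr i) ω} := by
    ext ω; simp [hYr, Finset.sum_apply]
  have hchern := measure_ge_le_exp_mul_mgf (μ := ℙ) (X := ∑ i, Yr i) (lam * μ) ht0 hintS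
  rw [hset2]
  refine le_trans hchern ?_
  rw [hindep'.mgf_sum hYmeas]
  -- per-factor bound
  have hfac : ∀ i ∈ Finset.univ, mgf (Yr i) ℙ t ≤ Real.exp (pstar / p i * L) := by
    intro i _
    have hval : mgf (Yr i) ℙ t = p i / (p i - u) := by
      have h2 := (hGeo i).2
      have : mgf (Yr i) ℙ t = p i * Real.exp t / (1 - (1 - p i) * Real.exp t) := h2
      rw [this, hexp]
      have hpu : p i - u ≠ 0 := by have := hupi i; linarith
      field_simp
      rw [show (1 - u - (1 - p i)) = p i - u by ring, mul_div_assoc, div_self hpu, mul_one]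
    rw [hval]
    have hpu : 0 < p i - u := by have := hupi i; linarith
    have hlhs : 0 < p i / (p i - u) := div_pos (hp0 i) hpu
    rw [← Real.log_le_iff_le_exp hlhs]
    have hrw : p i / (p i - u) = (1 - u / p i)⁻¹ := by
      rw [one_sub_div (hp0 i).ne']
      rw [inv_div]
    rw [hrw, Real.log_inv]
    -- goal: -log (1 - u / p i) ≤ pstar / p i * L
    rcases eq_or_lt_of_le hu0 with hu_eq | hu_pos
    · rw [← hu_eq]
      simp only [zero_div, sub_zero, Real.log_one, neg_zero]
      exact mul_nonneg (div_pos hps_pos (hp0 i)).le hL0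
    · have ha0 : 0 ≤ u / p i := div_nonneg hu0 (hp0 i).le
      have hab : u / p i ≤ u / pstar :=
        div_le_div_of_nonneg_left hu0 hps_pos (hps_le i)
      have hb : u / pstar = 1 - 1 / lam := by
        rw [hu]
        exact mul_div_cancel_left₀ _ hps_pos.ne'
      have hb1 : u / pstar < 1 := by rw [hb]; exact h1lam'
      have key := stmt12_aux_log ha0 hab hb1
      have hlog_b : -Real.log (1 - u / pstar) = L := by
        rw [hb]
        have : (1 : ℝ) - (1 - 1 / lam) = 1 / lam := by ring
        rw [this, one_div, Real.log_inv, neg_neg, hL]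
      rw [hlog_b] at key
      -- key : u / pstar * -log (1 - u / p i) ≤ u / p i * L
      have hbpos : 0 < u / pstar := div_pos hu_pos hps_pos
      rw [← le_div_iff₀' hbpos] at key
      refine key.trans_eq ?_
      have hune : u ≠ 0 := hu_pos.ne'
      have hpne : p i ≠ 0 := (hp0 i).ne'
      field_simp
  have hprod : (∏ i, mgf (Yr i) ℙ t) ≤ ∏ i, Real.exp (pstar / p i * L) :=
    Finset.prod_le_prod (fun i _ => mgf_nonneg) hfac
  have hprodexp : (∏ i, Real.exp (pstar / p i * L)) = Real.exp (pstar * μ * L) := by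
    rw [← Real.exp_sum]
    congr 1
    rw [hμ, Finset.mul_sum, Finset.sum_mul]
    refine Finset.sum_congr rfl fun i _ => ?_
    rw [div_eq_mul_one_div]
  have hμ0 : 0 ≤ μ := by
    rw [hμ]; exact Finset.sum_nonneg fun i _ => one_div_nonneg.mpr (hp0 i).le
  calc Real.exp (-t * (lam * μ)) * ∏ i, mgf (Yr i) ℙ t
      ≤ Real.exp (-t * (lam * μ)) * Real.exp (pstar * μ * L) := by
        rw [hprodexp] at hprod
        exact mul_le_mul_of_nonneg_left hprod (Real.exp_pos _).le
  _ ≤ Real.exp (-(pstar * μ * (lam - 1 - L))) := by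
      rw [← Real.exp_add, Real.exp_le_exp]
      have h1 : u * (lam * μ) ≤ t * (lam * μ) :=
        mul_le_mul_of_nonneg_right htu (mul_nonneg hlam0.le hμ0)
      have h2 : u * (lam * μ) = pstar * μ * (lam - 1) := by
        rw [hu]; field_simp
      nlinarith [h1, h2]
end

section
/- Let m, k, t be positive integers satisfying 2(k + t − 1) ≤ m and 3t(t−1) ≤ m − k (a precise form of the assumption k, t ≪ m). Let X₁, …, X_t be independent geometric random variables with Pr{X_i = j} = p_i(1−p_i)^{j−1} for j ≥ 1, where p_i = 1 − (k+i−1)/m. Then for every δ ∈ (0,1): Pr{ Σ_{i=1}^t X_i ≥ 4t + 4·ln(1/δ) } ≤ δ. (This is the quantitative core of the claim that, sampling uniformly with replacement from {1,…,m}, with probability 1 − δ at most O(t + log(1/δ)) draws suffice to collect t elements outside a fixed set of size k.) -/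
open MeasureTheory ProbabilityTheory
open scoped ProbabilityTheory

set_option maxHeartbeats 1000000 in
/-- quantitative core of Lemma on collecting `t` new elements by
uniform sampling: let `m, k, t` be positive integers with `2(k + t − 1) ≤ m` and
`3t(t−1) ≤ m − k`. Let `X₁, …, X_t` be independent geometric random variables where
`X_i` (1-based index `i`, modeled by `i : Fin t` with 1-based index `i+1`) has
parameter `p_i = 1 − (k + i − 1)/m`, i.e.
`Pr{X_i = j} = (1 − (k+i−1)/m)·((k+i−1)/m)^{j−1}` for `j ≥ 1`. Then for every
`δ ∈ (0,1)`: `Pr{Σ X_i ≥ 4t + 4·ln(1/δ)} ≤ δ`. -/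
theorem stmt13 {m k t : ℕ} (hm : 0 < m) (hk : 0 < k) (ht : 0 < t)
    (h1 : 2 * (k + t - 1) ≤ m) (h2 : 3 * t * (t - 1) ≤ m - k)
    {Ω : Type*} [MeasureSpace Ω] [IsProbabilityMeasure (ℙ : Measure Ω)]
    (X : Fin t → Ω → ℕ) (hXmeas : ∀ i, Measurable (X i))
    (hindep : iIndepFun X ℙ)
    (hpos : ∀ i, ∀ᵐ ω ∂ℙ, 1 ≤ X i ω)
    (hdist : ∀ i : Fin t, ∀ j : ℕ, 1 ≤ j →
      (ℙ {ω | X i ω = j}).toReal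
        = (1 - ((k + (i : ℕ) : ℕ) : ℝ) / m) * (((k + (i : ℕ) : ℕ) : ℝ) / m) ^ (j - 1))
    (δ : ℝ) (hδ0 : 0 < δ) (hδ1 : δ < 1) :
    (ℙ {ω | 4 * (t : ℝ) + 4 * Real.log (1 / δ) ≤ ∑ i, (X i ω : ℝ)}).toReal ≤ δ := by
  classical
  set lam : ℝ := Real.log (4 / 3) with hlam_def
  have hlam_pos : 0 < lam := Real.log_pos (by norm_num)
  set Y : Fin t → Ω → ℝ := fun i ω => (X i ω : ℝ) with hYdef
  have hYmeas : ∀ i, Measurable (Y i) := fun i => measurable_from_top.comp (hXmeas i)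
  have hYindep : iIndepFun Y ℙ :=
    hindep.comp (fun _ => (Nat.cast : ℕ → ℝ)) (fun _ => measurable_from_top)
  have hexp : ∀ n : ℕ, Real.exp (lam * n) = (4 / 3 : ℝ) ^ n := by
    intro n
    rw [mul_comm, Real.exp_nat_mul, Real.exp_log (by norm_num)]
  -- per-variable lintegral bound
  have key : ∀ i : Fin t,
      (∫⁻ ω, ENNReal.ofReal (Real.exp (lam * Y i ω)) ∂ℙ) ≤ ENNReal.ofReal 2 := by
    intro i
    set c : ℝ := ((k + (i : ℕ) : ℕ) : ℝ) / m with hc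
    have hc0 : 0 ≤ c := by positivity
    have hc2 : c ≤ 1 / 2 := by
      have hi : (i : ℕ) < t := i.isLt
      have h2ki : 2 * (k + (i : ℕ)) ≤ m := by omega
      rw [hc, div_le_iff₀ (by exact_mod_cast hm)]
      have h2ki' : ((2 * (k + (i : ℕ)) : ℕ) : ℝ) ≤ (m : ℝ) := by exact_mod_cast h2ki
      push_cast at h2ki' ⊢
      linarith
    have hr0 : (0 : ℝ) ≤ 4 / 3 * c := by linarith
    have hr1 : (4 / 3 : ℝ) * c < 1 := by linarith
    have hzero : ℙ {ω | X i ω = 0} = 0 := by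
      have h := hpos i
      rw [ae_iff] at h
      refine measure_mono_null ?_ h
      intro ω hω
      simp only [Set.mem_setOf_eq] at hω ⊢
      omega
    have hmap : ∀ n : ℕ, (Measure.map (X i) ℙ) {n} = ℙ {ω | X i ω = n} := by
      intro n
      rw [Measure.map_apply (hXmeas i) (measurableSet_singleton n)]
      rfl
    have hL : (∫⁻ ω, ENNReal.ofReal (Real.exp (lam * Y i ω)) ∂ℙ)
        = ∑' n : ℕ, ENNReal.ofReal ((4 / 3 : ℝ) ^ n) * ℙ {ω | X i ω = n} := by
      have h1' : (∫⁻ ω, ENNReal.ofReal (Real.exp (lam * Y i ω)) ∂ℙ)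
          = ∫⁻ n, ENNReal.ofReal ((4 / 3 : ℝ) ^ n) ∂(Measure.map (X i) ℙ) := by
        rw [lintegral_map (by measurability) (hXmeas i)]
        congr 1
        ext ω
        rw [hYdef]
        simp only
        rw [hexp]
      rw [h1', lintegral_countable']
      simp_rw [hmap]
    have hPn : ∀ n : ℕ, ℙ {ω | X i ω = n + 1} = ENNReal.ofReal ((1 - c) * c ^ n) := by
      intro n
      rw [← ENNReal.ofReal_toReal (measure_ne_top ℙ {ω | X i ω = n + 1}),
        hdist i (n + 1) (by omega)]
      simp only [hc, Nat.add_sub_cancel]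
    rw [hL, tsum_eq_zero_add' ENNReal.summable]
    rw [hzero, mul_zero, zero_add]
    have hterm : ∀ n : ℕ,
        ENNReal.ofReal ((4 / 3 : ℝ) ^ (n + 1)) * ℙ {ω | X i ω = n + 1}
          = ENNReal.ofReal ((4 / 3 * (1 - c)) * (4 / 3 * c) ^ n) := by
      intro n
      rw [hPn n, ← ENNReal.ofReal_mul (by positivity)]
      congr 1
      rw [mul_pow, pow_succ]
      ring
    simp_rw [hterm]
    rw [← ENNReal.ofReal_tsum_of_nonneg
      (fun n => mul_nonneg (by nlinarith) (pow_nonneg hr0 _))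
      (by exact (summable_geometric_of_lt_one hr0 hr1).mul_left _)]
    apply ENNReal.ofReal_le_ofReal
    rw [tsum_mul_left, tsum_geometric_of_lt_one hr0 hr1, ← div_eq_mul_inv,
      div_le_iff₀ (by linarith)]
    linarith
  -- integrability and mgf bound
  have hmeasexp : ∀ i : Fin t,
      Measurable (fun ω => Real.exp (lam * Y i ω)) := fun i =>
    (((hYmeas i).const_mul lam).exp)
  have hint : ∀ i : Fin t, Integrable (fun ω => Real.exp (lam * Y i ω)) ℙ := by
    intro i
    refine ⟨(hmeasexp i).aestronglyMeasurable, ?_⟩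
    rw [hasFiniteIntegral_iff_ofReal (ae_of_all _ fun ω => (Real.exp_pos _).le)]
    exact lt_of_le_of_lt (key i) ENNReal.ofReal_lt_top
  have hmgf : ∀ i : Fin t, mgf (Y i) ℙ lam ≤ 2 := by
    intro i
    rw [mgf, integral_eq_lintegral_of_nonneg_ae (ae_of_all _ fun ω => (Real.exp_pos _).le)
      (hmeasexp i).aestronglyMeasurable]
    calc (∫⁻ ω, ENNReal.ofReal (Real.exp (lam * Y i ω)) ∂ℙ).toReal
        ≤ (ENNReal.ofReal 2).toReal :=
          ENNReal.toReal_mono ENNReal.ofReal_ne_top (key i)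
      _ = 2 := by norm_num
  -- Chernoff assembly
  set a : ℝ := 4 * (t : ℝ) + 4 * Real.log (1 / δ) with ha
  have hintS : Integrable (fun ω => Real.exp (lam * (∑ i, Y i) ω)) ℙ :=
    hYindep.integrable_exp_mul_sum hYmeas (fun i _ => hint i)
  have hset : {ω | a ≤ ∑ i, (X i ω : ℝ)} = {ω | a ≤ (∑ i, Y i) ω} := by
    ext ω
    simp [hYdef]
  have hch := measure_ge_le_exp_mul_mgf (X := ∑ i, Y i) (μ := ℙ) a hlam_pos.le hintS
  rw [hYindep.mgf_sum hYmeas] at hch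
  have hprod : ∏ i : Fin t, mgf (Y i) ℙ lam ≤ 2 ^ t := by
    calc ∏ i : Fin t, mgf (Y i) ℙ lam ≤ ∏ _i : Fin t, (2 : ℝ) :=
          Finset.prod_le_prod (fun i _ => mgf_nonneg) (fun i _ => hmgf i)
      _ = 2 ^ t := by simp
  have hstep : (ℙ {ω | a ≤ (∑ i, Y i) ω}).toReal ≤ Real.exp (-lam * a) * 2 ^ t := by
    refine hch.trans ?_
    have := Real.exp_pos (-lam * a)
    nlinarith [Finset.prod_le_prod (s := (Finset.univ : Finset (Fin t)))
      (fun i _ => mgf_nonneg (X := Y i) (μ := ℙ) (t := lam)) (fun i _ => hmgf i), hprod]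
  rw [hset]
  refine hstep.trans ?_
  -- arithmetic: exp(-λ a) 2^t ≤ δ
  have hLg : 0 ≤ Real.log (1 / δ) := Real.log_nonneg (by rw [le_one_div (by norm_num) hδ0]; linarith)
  have h4lam : 4 * lam = Real.log (256 / 81) := by
    rw [hlam_def, show (256 / 81 : ℝ) = (4 / 3 : ℝ) ^ (4 : ℕ) by norm_num, Real.log_pow]
    norm_num
  have hlam1 : 1 ≤ 4 * lam := by
    rw [h4lam, Real.le_log_iff_exp_le (by norm_num)]
    calc Real.exp 1 ≤ 2.7182818286 := Real.exp_one_lt_d9.le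
      _ ≤ 256 / 81 := by norm_num
  have hlam2 : Real.log 2 ≤ 4 * lam := by
    rw [h4lam]
    exact Real.log_le_log (by norm_num) (by norm_num)
  have ht1 : (1 : ℝ) ≤ (t : ℝ) := by exact_mod_cast ht
  have h2t : (2 : ℝ) ^ t = Real.exp ((t : ℝ) * Real.log 2) := by
    rw [Real.exp_nat_mul, Real.exp_log (by norm_num)]
  rw [h2t, ← Real.exp_add]
  have hlogδ : Real.log (1 / δ) = -Real.log δ := by
    rw [one_div, Real.log_inv]
  have hLg' : 0 ≤ -Real.log δ := hlogδ ▸ hLg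
  have : -lam * a + (t : ℝ) * Real.log 2 ≤ Real.log δ := by
    rw [ha, hlogδ]
    nlinarith [mul_nonneg (sub_nonneg.mpr hlam2) (by linarith : (0:ℝ) ≤ (t:ℝ)),
      mul_nonneg (sub_nonneg.mpr hlam1) hLg']
  calc Real.exp (-lam * a + (t : ℝ) * Real.log 2) ≤ Real.exp (Real.log δ) :=
        Real.exp_le_exp.mpr this
    _ = δ := Real.exp_log hδ0
end

section
/- Let P₁, …, P_N be real symmetric idempotent n×n matrices (orthogonal projection matrices), let p₁, …, p_N ≥ 0 with Σ_i p_i = 1, and set M := Σ_i p_i P_i. Assume M ≠ 0 and let μ denote the smallest nonzero eigenvalue of the symmetric positive semidefinite matrix M. Then for every vector v ∈ ℝⁿ orthogonal to the kernel of M: Σ_{i=1}^N p_i · ‖v − P_i v‖² ≤ (1 − μ) · ‖v‖². (This is the one-step contraction E‖(I − P_S)v‖² ≤ (1 − λ_min⁺(E[P_S]))·‖v‖² of sketch-and-project.) -/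
open Matrix RealInnerProductSpace

/-- one-step contraction of sketch-and-project: let
`P₁, …, P_N` be real symmetric idempotent `n × n` matrices (orthogonal projections),
`p₁, …, p_N ≥ 0` with `Σ p_i = 1`, and `M := Σ p_i P_i ≠ 0`. If `μ` is the smallest
nonzero eigenvalue of the symmetric psd matrix `M`, then every `v` orthogonal to the
kernel of `M` satisfies `Σ_i p_i ‖v − P_i v‖² ≤ (1 − μ)·‖v‖²`. -/
theorem stmt14 {n N : ℕ} (P : Fin N → Matrix (Fin n) (Fin n) ℝ)
    (hsymm : ∀ i, (P i)ᵀ = P i) (hidem : ∀ i, P i * P i = P i)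
    (p : Fin N → ℝ) (hp : ∀ i, 0 ≤ p i) (hsum : ∑ i, p i = 1)
    (M : Matrix (Fin n) (Fin n) ℝ) (hM : M = ∑ i, p i • P i) (hM0 : M ≠ 0)
    (μ : ℝ)
    (hμeig : Module.End.HasEigenvalue (Matrix.toLin' M) μ) (hμpos : 0 < μ)
    (hμmin : ∀ c : ℝ, Module.End.HasEigenvalue (Matrix.toLin' M) c → 0 < c → μ ≤ c)
    (v : Fin n → ℝ) (hv : ∀ w : Fin n → ℝ, M *ᵥ w = 0 → v ⬝ᵥ w = 0) :
    ∑ i, p i * ((v - P i *ᵥ v) ⬝ᵥ (v - P i *ᵥ v)) ≤ (1 - μ) * (v ⬝ᵥ v) := by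
  -- M is positive semidefinite
  have hPsd : ∀ i, (P i).PosSemidef := by
    intro i
    have h := Matrix.posSemidef_conjTranspose_mul_self (P i)
    rwa [conjTranspose_eq_transpose_of_trivial, hsymm i, hidem i] at h
  have hsum_mv : ∀ (f : Fin N → Matrix (Fin n) (Fin n) ℝ) (w : Fin n → ℝ),
      (∑ i, f i) *ᵥ w = ∑ i, f i *ᵥ w := by
    intro f w
    ext j
    simp only [Matrix.mulVec, dotProduct, Finset.sum_apply, Matrix.sum_apply, Finset.sum_mul]
    rw [Finset.sum_comm]
  have dp_sum : ∀ (u : Fin n → ℝ) (g : Fin N → Fin n → ℝ),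
      (star u) ⬝ᵥ (∑ i, g i) = ∑ i, (star u) ⬝ᵥ g i := by
    intro u g
    simp only [dotProduct, Finset.sum_apply, Finset.mul_sum]
    rw [Finset.sum_comm]
  have hMpsd : M.PosSemidef := by
    rw [hM]
    rw [posSemidef_iff_dotProduct_mulVec]
    constructor
    · show (∑ i, p i • P i)ᴴ = ∑ i, p i • P i
      rw [conjTranspose_eq_transpose_of_trivial, Matrix.transpose_sum]
      exact Finset.sum_congr rfl fun i _ => by rw [Matrix.transpose_smul, hsymm i]
    · intro x
      rw [hsum_mv fun i => p i • P i, dp_sum]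
      apply Finset.sum_nonneg
      intro i _
      rw [Matrix.smul_mulVec, dotProduct_smul]
      exact mul_nonneg (hp i) ((hPsd i).dotProduct_mulVec_nonneg x)
  have hHerm : M.IsHermitian := hMpsd.1
  set b := hHerm.eigenvectorBasis with hb
  set lam := hHerm.eigenvalues with hlam
  have hmv : ∀ j, M *ᵥ ⇑(b j) = lam j • ⇑(b j) := hHerm.mulVec_eigenvectorBasis
  -- key: μ * (v ⬝ᵥ v) ≤ v ⬝ᵥ (M *ᵥ v)
  have hkey : μ * (v ⬝ᵥ v) ≤ v ⬝ᵥ (M *ᵥ v) := by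
    set x : EuclideanSpace ℝ (Fin n) := (WithLp.equiv 2 _).symm v with hx
    set y : EuclideanSpace ℝ (Fin n) := (WithLp.equiv 2 _).symm (M *ᵥ v) with hy
    have h1 : ∑ j, ⟪x, b j⟫ * ⟪b j, x⟫ = ⟪x, x⟫ := b.sum_inner_mul_inner x x
    have h2 : ∑ j, ⟪x, b j⟫ * ⟪b j, y⟫ = ⟪x, y⟫ := b.sum_inner_mul_inner x y
    have hinner : ∀ z w : EuclideanSpace ℝ (Fin n), ⟪z, w⟫ = (⇑z) ⬝ᵥ (⇑w) := by
      intro z w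
      simp [PiLp.inner_apply, dotProduct]
      exact Finset.sum_congr rfl fun _ _ => mul_comm _ _
    have hbj : ∀ j, ⟪b j, y⟫ = lam j * ⟪b j, x⟫ := by
      intro j
      rw [hinner, hinner]
      have hMT : Mᵀ = M := by
        rw [← conjTranspose_eq_transpose_of_trivial]; exact hHerm.eq
      have : (⇑(b j)) ⬝ᵥ (M *ᵥ v) = (M *ᵥ ⇑(b j)) ⬝ᵥ v := by
        rw [dotProduct_mulVec, ← Matrix.mulVec_transpose, hMT]
      rw [hy]
      show (⇑(b j)) ⬝ᵥ (M *ᵥ v) = _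
      rw [this, hmv j, smul_dotProduct]
      rfl
    have hxx : ⟪x, x⟫ = v ⬝ᵥ v := hinner x x
    have hxy : ⟪x, y⟫ = v ⬝ᵥ (M *ᵥ v) := hinner x y
    rw [← hxx, ← hxy, ← h1, ← h2, Finset.mul_sum]
    apply Finset.sum_le_sum
    intro j _
    rw [hbj j]
    have hcomm : ⟪x, b j⟫ = ⟪b j, x⟫ := real_inner_comm _ _
    rw [hcomm]
    set c : ℝ := ⟪b j, x⟫ with hc
    have hnn : (0:ℝ) ≤ lam j := Matrix.PosSemidef.eigenvalues_nonneg ⟨hHerm, hMpsd.2⟩ j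
    rcases lt_or_eq_of_le hnn with hpos | hzero
    · have hle : μ ≤ lam j := by
        apply hμmin _ _ hpos
        apply Module.End.hasEigenvalue_of_hasEigenvector (x := ⇑(b j))
        constructor
        · rw [Module.End.mem_eigenspace_iff, Matrix.toLin'_apply, hmv j]
        · intro h0
          exact b.orthonormal.ne_zero j (by ext k; exact congrFun h0 k)
      nlinarith [mul_self_nonneg c]
    · have hker : M *ᵥ ⇑(b j) = 0 := by rw [hmv j, ← hzero, zero_smul]
      have hc0 : c = 0 := by
        rw [hc, hinner]
        have := hv _ hker
        rwa [dotProduct_comm] at this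
      rw [hc0]
      simp
  -- algebraic identity
  have halg : ∑ i, p i * ((v - P i *ᵥ v) ⬝ᵥ (v - P i *ᵥ v)) = v ⬝ᵥ v - v ⬝ᵥ (M *ᵥ v) := by
    have hterm : ∀ i, (v - P i *ᵥ v) ⬝ᵥ (v - P i *ᵥ v) = v ⬝ᵥ v - v ⬝ᵥ (P i *ᵥ v) := by
      intro i
      have hPP : (P i *ᵥ v) ⬝ᵥ (P i *ᵥ v) = v ⬝ᵥ (P i *ᵥ v) := by
        rw [dotProduct_mulVec, ← Matrix.mulVec_transpose, hsymm i, Matrix.mulVec_mulVec, hidem i]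
        exact dotProduct_comm _ _
      have hc : (P i *ᵥ v) ⬝ᵥ v = v ⬝ᵥ (P i *ᵥ v) := dotProduct_comm _ _
      rw [sub_dotProduct, dotProduct_sub, dotProduct_sub, hPP, hc]
      ring
    rw [Finset.sum_congr rfl (fun i _ => by rw [hterm i])]
    rw [hM]
    rw [hsum_mv fun i => p i • P i]
    have := dp_sum v (fun i => (p i • P i) *ᵥ v)
    simp only [star_trivial] at this
    rw [this]
    simp only [Matrix.smul_mulVec, dotProduct_smul, smul_eq_mul, mul_sub]
    rw [Finset.sum_sub_distrib, ← Finset.sum_mul, hsum, one_mul]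
  rw [halg]
  nlinarith [hkey]
end
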